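/- arXiv:2004.11525 — 4 statements merged into one kernel-verified Lean document; each statement's English description precedes it below -/
import Mathlib

section
/- For a pure state ρ on H₁⊗H₂ with dim H₁ = d₁ ≤ d₂ = dim H₂, written in Bloch representation ρ = (1/(d₁d₂))I⊗I + (1/(2d₂))Σ t¹_{i}λ_i⊗I + (1/(2d₁))Σ t²_{j}I⊗λ_j + (1/4)Σ t¹²_{ij}λ_i⊗λ_j, the two-body correlation tensor satisfies ‖T^{(12)}‖² ≤ 4(d₂²−1)/d₂². -/
open Matrix BigOperators
open scoped Kronecker ComplexOrder

lemma kron_conjT {m n : Type*} [Fintype m] [Fintype n] [DecidableEq m] [DecidableEq n]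
    (A : Matrix m m ℂ) (B : Matrix n n ℂ) : (A ⊗ₖ B)ᴴ = Aᴴ ⊗ₖ Bᴴ := by
  ext ⟨i, j⟩ ⟨k, l⟩
  simp [Matrix.conjTranspose_apply, Matrix.kroneckerMap_apply, star_mul']

lemma trace_conjT_mul_self_re_nonneg {n : Type*} [Fintype n] (M : Matrix n n ℂ) :
    0 ≤ (Mᴴ * M).trace.re := by
  simp only [Matrix.trace, Matrix.diag, Matrix.mul_apply, Matrix.conjTranspose_apply]
  rw [Complex.re_sum]
  refine Finset.sum_nonneg fun k _ => ?_
  rw [Complex.re_sum]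
  refine Finset.sum_nonneg fun l _ => ?_
  simpa [Complex.normSq_apply] using Complex.normSq_nonneg (M l k)


/-- For a pure state ρ on H₁⊗H₂ with d₁ ≤ d₂, written in Bloch
representation with mutually orthogonal traceless Hermitian su(d) generators
(normalized by tr(λᵢλⱼ) = 2δᵢⱼ), the two-body correlation tensor satisfies
‖T^{(12)}‖² ≤ 4(d₂²−1)/d₂². -/
theorem bipartite_pure_correlation_bound
    (d₁ d₂ : ℕ) (hd₁ : 2 ≤ d₁) (h12 : d₁ ≤ d₂)
    (lam1 : Fin (d₁ ^ 2 - 1) → Matrix (Fin d₁) (Fin d₁) ℂ)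
    (lam2 : Fin (d₂ ^ 2 - 1) → Matrix (Fin d₂) (Fin d₂) ℂ)
    (h1herm : ∀ i, (lam1 i).IsHermitian)
    (h1tr : ∀ i, (lam1 i).trace = 0)
    (h1orth : ∀ i j, (lam1 i * lam1 j).trace = if i = j then 2 else 0)
    (h2herm : ∀ i, (lam2 i).IsHermitian)
    (h2tr : ∀ i, (lam2 i).trace = 0)
    (h2orth : ∀ i j, (lam2 i * lam2 j).trace = if i = j then 2 else 0)
    (ρ : Matrix (Fin d₁ × Fin d₂) (Fin d₁ × Fin d₂) ℂ)
    (hρ : ρ.PosSemidef) (hρtr : ρ.trace = 1) (hpure : ρ * ρ = ρ) :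
    ∑ i : Fin (d₁ ^ 2 - 1), ∑ j : Fin (d₂ ^ 2 - 1),
        (Complex.re ((ρ * (lam1 i ⊗ₖ lam2 j)).trace)) ^ 2
      ≤ 4 * ((d₂ : ℝ) ^ 2 - 1) / (d₂ : ℝ) ^ 2 := by
  set K : Fin (d₁ ^ 2 - 1) → Fin (d₂ ^ 2 - 1) → Matrix (Fin d₁ × Fin d₂) (Fin d₁ × Fin d₂) ℂ :=
    fun i j => lam1 i ⊗ₖ lam2 j with hK
  set t : Fin (d₁ ^ 2 - 1) → Fin (d₂ ^ 2 - 1) → ℝ :=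
    fun i j => ((ρ * K i j).trace).re with ht
  have hρherm : ρᴴ = ρ := hρ.1
  have hKherm : ∀ i j, (K i j)ᴴ = K i j := by
    intro i j; rw [hK]; rw [kron_conjT, h1herm i, h2herm j]
  have hreal : ∀ i j, (ρ * K i j).trace = ((t i j : ℝ) : ℂ) := by
    intro i j
    have hstar : (starRingEnd ℂ) ((ρ * K i j).trace) = (ρ * K i j).trace := by
      rw [← Complex.star_def, ← Matrix.trace_conjTranspose, Matrix.conjTranspose_mul, hKherm,
        hρherm, Matrix.trace_mul_comm]
    exact (Complex.conj_eq_iff_re.mp hstar).symm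
  have hKtrace : ∀ i j, (K i j).trace = 0 := by
    intro i j; rw [hK]; simp [Matrix.trace_kronecker, h1tr i]
  have hKK : ∀ i j k l, (K i j * K k l).trace =
      (if i = k then (2:ℂ) else 0) * (if j = l then 2 else 0) := by
    intro i j k l
    rw [hK]
    simp only [← Matrix.mul_kronecker_mul, Matrix.trace_kronecker, h1orth, h2orth]
  set c : ℂ := 1 / ((d₁ : ℂ) * (d₂ : ℂ)) with hc
  set a : Fin (d₁ ^ 2 - 1) → Fin (d₂ ^ 2 - 1) → ℂ := fun i j => ((t i j / 4 : ℝ) : ℂ) with ha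
  set T : Matrix (Fin d₁ × Fin d₂) (Fin d₁ × Fin d₂) ℂ :=
    ∑ i : Fin (d₁ ^ 2 - 1), ∑ j : Fin (d₂ ^ 2 - 1), a i j • K i j with hT
  set M : Matrix (Fin d₁ × Fin d₂) (Fin d₁ × Fin d₂) ℂ := ρ - c • 1 - T with hM
  set S : ℝ := ∑ i : Fin (d₁ ^ 2 - 1), ∑ j : Fin (d₂ ^ 2 - 1), (t i j) ^ 2 with hS
  have hd₁R : (2:ℝ) ≤ (d₁ : ℝ) := by exact_mod_cast hd₁
  have hd₂R : (d₁:ℝ) ≤ (d₂ : ℝ) := by exact_mod_cast h12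
  have hd₁c : ((d₁ : ℂ)) ≠ 0 := by
    simpa using fun h => by omega
  have hd₂c : ((d₂ : ℂ)) ≠ 0 := by
    simpa using fun h => by omega
  -- trace computations
  have hρρ : (ρ * ρ).trace = 1 := by rw [hpure, hρtr]
  have hρ1 : (ρ * (c • 1)).trace = c := by
    rw [Matrix.mul_smul, mul_one, Matrix.trace_smul, hρtr, smul_eq_mul, mul_one]
  have hρT : (ρ * T).trace = (((S / 4 : ℝ)) : ℂ) := by
    rw [hT, Finset.mul_sum, Matrix.trace_sum]
    have : ∀ i, (ρ * ∑ j, a i j • K i j).trace = ∑ j, a i j * ((t i j : ℝ) : ℂ) := by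
      intro i
      rw [Finset.mul_sum, Matrix.trace_sum]
      refine Finset.sum_congr rfl fun j _ => ?_
      rw [Matrix.mul_smul, Matrix.trace_smul, hreal, smul_eq_mul]
    simp_rw [this, ha, hS]
    push_cast
    rw [Finset.sum_div]
    refine Finset.sum_congr rfl fun i _ => ?_
    rw [Finset.sum_div]
    refine Finset.sum_congr rfl fun j _ => ?_
    ring
  have hTtrace : T.trace = 0 := by
    rw [hT, Matrix.trace_sum]
    refine Finset.sum_eq_zero fun i _ => ?_
    rw [Matrix.trace_sum]
    refine Finset.sum_eq_zero fun j _ => ?_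
    rw [Matrix.trace_smul, hKtrace, smul_zero]
  have hTρ : (T * ρ).trace = (((S / 4 : ℝ)) : ℂ) := by
    rw [Matrix.trace_mul_comm, hρT]
  have hTT : (T * T).trace = (((S / 4 : ℝ)) : ℂ) := by
    rw [hT, Finset.sum_mul, Matrix.trace_sum]
    have step : ∀ i, ((∑ j, a i j • K i j) * ∑ k, ∑ l, a k l • K k l).trace
        = ∑ j, a i j * a i j * 4 := by
      intro i
      rw [Finset.sum_mul, Matrix.trace_sum]
      refine Finset.sum_congr rfl fun j _ => ?_
      rw [Finset.mul_sum, Matrix.trace_sum]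
      have inner : ∀ k, ((a i j • K i j) * ∑ l, a k l • K k l).trace
          = ∑ l, a i j * a k l * ((if i = k then (2:ℂ) else 0) * (if j = l then 2 else 0)) := by
        intro k
        rw [Finset.mul_sum, Matrix.trace_sum]
        refine Finset.sum_congr rfl fun l _ => ?_
        rw [Matrix.smul_mul, Matrix.mul_smul, Matrix.trace_smul, Matrix.trace_smul, hKK,
          smul_eq_mul, smul_eq_mul]
        ring
      simp_rw [inner]
      have collapse : ∀ k l, a i j * a k l * ((if i = k then (2:ℂ) else 0) * (if j = l then 2 else 0))
          = if k = i then (if l = j then a i j * a i j * 4 else 0) else 0 := by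
        intro k l
        rcases eq_or_ne i k with h1 | h1
        · subst h1
          rcases eq_or_ne j l with h2 | h2
          · subst h2; simp only [if_pos rfl, if_true, eq_self_iff_true]; ring
          · simp only [if_pos rfl, if_true, eq_self_iff_true, if_neg h2, if_neg h2.symm]; ring
        · simp only [if_neg h1, if_neg h1.symm]; ring
      simp_rw [collapse]
      simp [Finset.sum_ite_eq', Finset.sum_ite_eq]
    simp_rw [step, ha, hS]
    push_cast
    rw [Finset.sum_div]
    refine Finset.sum_congr rfl fun i _ => ?_
    rw [Finset.sum_div]
    refine Finset.sum_congr rfl fun j _ => ?_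
    ring
  have hMtr : M.trace = 0 := by
    rw [hM, Matrix.trace_sub, Matrix.trace_sub, hρtr, Matrix.trace_smul, hTtrace,
      Matrix.trace_one, hc]
    have : (Fintype.card (Fin d₁ × Fin d₂) : ℂ) = (d₁ : ℂ) * (d₂ : ℂ) := by
      simp [Fintype.card_prod]
    rw [smul_eq_mul, this]
    field_simp
    simp
  have hMherm : Mᴴ = M := by
    rw [hM, Matrix.conjTranspose_sub, Matrix.conjTranspose_sub, hρherm, Matrix.conjTranspose_smul,
      Matrix.conjTranspose_one, hT, Matrix.conjTranspose_sum]
    have hcs : star c = c := by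
      rw [hc]; simp
    rw [hcs]
    congr 1
    refine Finset.sum_congr rfl fun i _ => ?_
    rw [Matrix.conjTranspose_sum]
    refine Finset.sum_congr rfl fun j _ => ?_
    rw [Matrix.conjTranspose_smul, hKherm, ha]
    simp
  have hMM : (M * M).trace = 1 - c - (((S / 4 : ℝ)) : ℂ) := by
    have e1 : M * M = ρ * M - (c • 1) * M - T * M := by
      rw [hM, Matrix.sub_mul, Matrix.sub_mul]
    have e2 : (ρ * M).trace = 1 - c - (((S / 4 : ℝ)) : ℂ) := by
      rw [hM, Matrix.mul_sub, Matrix.mul_sub, Matrix.trace_sub, Matrix.trace_sub, hρρ, hρ1, hρT]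
    have e3 : ((c • 1 : Matrix (Fin d₁ × Fin d₂) (Fin d₁ × Fin d₂) ℂ) * M).trace = 0 := by
      rw [Matrix.smul_mul, one_mul, Matrix.trace_smul, hMtr, smul_zero]
    have e4 : (T * M).trace = 0 := by
      rw [hM, Matrix.mul_sub, Matrix.mul_sub, Matrix.trace_sub, Matrix.trace_sub, hTρ, hTT,
        Matrix.mul_smul, mul_one, Matrix.trace_smul, hTtrace, smul_zero]
      ring
    rw [e1, Matrix.trace_sub, Matrix.trace_sub, e2, e3, e4]
    ring
  have hnn : 0 ≤ ((M * M).trace).re := by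
    have := trace_conjT_mul_self_re_nonneg M
    rwa [hMherm] at this
  rw [hMM] at hnn
  have hcre : c.re = 1 / ((d₁:ℝ) * (d₂:ℝ)) := by
    rw [hc]
    have : ((d₁ : ℂ) * (d₂ : ℂ)) = (((d₁:ℝ) * (d₂:ℝ) : ℝ) : ℂ) := by push_cast; ring
    rw [this, ← Complex.ofReal_one, ← Complex.ofReal_div, Complex.ofReal_re]
  have hre : (1 - c - (((S / 4 : ℝ)) : ℂ)).re = 1 - 1 / ((d₁:ℝ) * (d₂:ℝ)) - S / 4 := by
    simp [Complex.sub_re, hcre]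
  rw [hre] at hnn
  -- Now S ≤ 4 - 4/(d₁ d₂) ≤ 4(d₂²-1)/d₂²
  have hd₂pos : (0:ℝ) < (d₂:ℝ) := by linarith
  have hd₁pos : (0:ℝ) < (d₁:ℝ) := by linarith
  have h1 : 4 / (d₂:ℝ)^2 ≤ 4 / ((d₁:ℝ) * (d₂:ℝ)) := by
    apply div_le_div_of_nonneg_left (by norm_num) (by positivity)
    nlinarith
  have h2 : 4 * ((d₂:ℝ)^2 - 1) / (d₂:ℝ)^2 = 4 - 4 / (d₂:ℝ)^2 := by
    field_simp
  have h3 : 4 / ((d₁:ℝ) * (d₂:ℝ)) = 4 * (1 / ((d₁:ℝ) * (d₂:ℝ))) := by ring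
  rw [h2]
  linarith
end

section
/- For a pure state ρ on H₁⊗H₂ with dim H₁ = d₁ ≤ d₂ = dim H₂, the exact identity ‖T^{(12)}‖² = 4(d₂²−1)/d₂² − (2(d₁+d₂)/(d₁d₂))‖T^{(2)}‖² holds, where T^{(2)} is the local Bloch vector of the second subsystem. -/
open Matrix BigOperators
open scoped Kronecker ComplexOrder

lemma parseval_trace {n ι : Type*} [Fintype n] [DecidableEq n] [Fintype ι] [DecidableEq ι] [Nonempty ι]
    (f : ι → Matrix n n ℂ) (c : ι → ℂ) (hc : ∀ i, c i ≠ 0)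
    (horth : ∀ i j, (f i * f j).trace = if i = j then c i else 0)
    (hcard : Fintype.card ι = Fintype.card n * Fintype.card n)
    (X : Matrix n n ℂ) :
    (X * X).trace = ∑ i, (X * f i).trace ^ 2 / c i := by
  classical
  have hli : LinearIndependent ℂ f := by
    rw [Fintype.linearIndependent_iff]
    intro g hg j
    have h0 : ((∑ i, g i • f i) * f j).trace = 0 := by rw [hg, Matrix.zero_mul, trace_zero]
    rw [Finset.sum_mul] at h0
    simp only [smul_mul_assoc, trace_sum, trace_smul, horth, smul_eq_mul, mul_ite, mul_zero,
      Finset.sum_ite_eq', Finset.mem_univ, if_true] at h0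
    exact (mul_eq_zero.mp h0).resolve_right (hc j)
  have hsp := hli.span_eq_top_of_card_eq_finrank (by
    rw [hcard, Module.finrank_matrix, Module.finrank_self, mul_one])
  have hX : X ∈ Submodule.span ℂ (Set.range f) := by rw [hsp]; trivial
  obtain ⟨a, ha⟩ := (Submodule.mem_span_range_iff_exists_fun ℂ).mp hX
  have htr : ∀ j, (X * f j).trace = a j * c j := by
    intro j
    rw [← ha, Finset.sum_mul]
    simp only [smul_mul_assoc, trace_sum, trace_smul, horth, smul_eq_mul, mul_ite, mul_zero,
      Finset.sum_ite_eq', Finset.mem_univ, if_true]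
  calc (X * X).trace = ((∑ i, a i • f i) * X).trace := by rw [ha]
    _ = ∑ i, a i * (X * f i).trace := by
        rw [Finset.sum_mul, trace_sum]
        exact Finset.sum_congr rfl fun i _ => by
          rw [smul_mul_assoc, trace_smul, smul_eq_mul, trace_mul_comm]
    _ = ∑ i, (X * f i).trace ^ 2 / c i := by
        refine Finset.sum_congr rfl fun i _ => ?_
        rw [htr i, mul_pow, pow_two (c i), mul_div_assoc, mul_div_assoc,
          div_self (hc i), mul_one]
        ring

lemma pure_rank_one {n : Type*} [Fintype n] [DecidableEq n]
    (ρ : Matrix n n ℂ) (hherm : ρ.IsHermitian) (hpure : ρ * ρ = ρ) (htr : ρ.trace = 1) :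
    ∃ v : n → ℂ, ∀ x y, ρ x y = v x * (starRingEnd ℂ) (v y) := by
  classical
  set U : Matrix n n ℂ := (hherm.eigenvectorUnitary : Matrix n n ℂ) with hU
  set e : n → ℝ := hherm.eigenvalues with he
  set D : Matrix n n ℂ := diagonal (RCLike.ofReal ∘ e) with hDdef
  have hspec : ρ = U * D * star U := hherm.spectral_theorem
  have hU1 : star U * U = 1 := (Unitary.mem_iff.mp hherm.eigenvectorUnitary.2).1
  have hU2 : U * star U = 1 := (Unitary.mem_iff.mp hherm.eigenvectorUnitary.2).2
  have hD : star U * ρ * U = D := by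
    have h := hherm.conjStarAlgAut_star_eigenvectorUnitary
    rw [Unitary.conjStarAlgAut_star_apply] at h
    exact h
  have hDD : D * D = D := by
    rw [← hD]
    calc star U * ρ * U * (star U * ρ * U)
        = star U * (ρ * (U * star U) * ρ) * U := by
          simp only [Matrix.mul_assoc]
      _ = star U * ρ * U := by rw [hU2, Matrix.mul_one, hpure, Matrix.mul_assoc]
  have hsq : ∀ i, e i = 0 ∨ e i = 1 := by
    intro i
    have h := congrFun (congrFun hDD i) i
    rw [hDdef, diagonal_mul_diagonal] at h
    simp only [diagonal_apply_eq, Function.comp_apply] at h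
    have h' : e i * e i = e i := by exact_mod_cast h
    have : e i * (e i - 1) = 0 := by ring_nf; linarith
    rcases mul_eq_zero.mp this with h2 | h2
    · exact Or.inl h2
    · exact Or.inr (by linarith)
  have hsum : ∑ i, e i = 1 := by
    have h1 : ρ.trace = D.trace := by
      rw [hspec, trace_mul_cycle, hU1, Matrix.one_mul]
    rw [htr, hDdef, trace_diagonal] at h1
    have : ((1:ℝ):ℂ) = ((∑ i, e i : ℝ) : ℂ) := by push_cast; simpa using h1
    exact_mod_cast this.symm
  have hnn : ∀ i, 0 ≤ e i := fun i => by rcases hsq i with h | h <;> simp [h]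
  have hex : ∃ k, e k = 1 := by
    by_contra h
    push_neg at h
    have h0 : ∀ i, e i = 0 := fun i => (hsq i).resolve_right (h i)
    simp [h0] at hsum
  obtain ⟨k, hk⟩ := hex
  have hzero : ∀ i, i ≠ k → e i = 0 := by
    intro i hi
    by_contra h
    have hi1 : e i = 1 := (hsq i).resolve_left h
    have hsub : ({i, k} : Finset n) ⊆ Finset.univ := Finset.subset_univ _
    have hle : ∑ j ∈ ({i, k} : Finset n), e j ≤ ∑ j, e j :=
      Finset.sum_le_sum_of_subset_of_nonneg hsub (fun j _ _ => hnn j)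
    rw [Finset.sum_pair hi, hi1, hk, hsum] at hle
    linarith
  refine ⟨fun x => U x k, fun x y => ?_⟩
  have hxy := congrFun (congrFun hspec x) y
  rw [Matrix.mul_apply] at hxy
  rw [hxy, Finset.sum_eq_single k]
  · rw [Matrix.mul_diagonal]
    simp only [hDdef, Function.comp_apply, hk, Matrix.star_apply, RCLike.star_def]
    norm_num
  · intro l _ hl
    rw [Matrix.mul_diagonal]
    simp [hDdef, hzero l hl]
  · simp

variable {d₁ d₂ : ℕ}

lemma trace_mul_kron (ρ : Matrix (Fin d₁ × Fin d₂) (Fin d₁ × Fin d₂) ℂ)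
    (A : Matrix (Fin d₁) (Fin d₁) ℂ) (B : Matrix (Fin d₂) (Fin d₂) ℂ) :
    (ρ * (A ⊗ₖ B)).trace
      = ∑ i, ∑ i', ∑ j, ∑ j', ρ (i, j) (i', j') * (A i' i * B j' j) := by
  rw [Matrix.trace]
  simp only [Matrix.diag_apply, Matrix.mul_apply, Matrix.kroneckerMap_apply,
    Fintype.sum_prod_type]
  refine Finset.sum_congr rfl fun i _ => ?_
  rw [Finset.sum_comm]

lemma trace_mul_left_pt (ρ : Matrix (Fin d₁ × Fin d₂) (Fin d₁ × Fin d₂) ℂ)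
    (A : Matrix (Fin d₁) (Fin d₁) ℂ) :
    (ρ * (A ⊗ₖ (1 : Matrix (Fin d₂) (Fin d₂) ℂ))).trace
      = (Matrix.of (fun i i' => ∑ j, ρ (i, j) (i', j)) * A).trace := by
  rw [trace_mul_kron, Matrix.trace]
  simp only [Matrix.diag_apply, Matrix.mul_apply, Matrix.of_apply, Finset.sum_mul]
  refine Finset.sum_congr rfl fun i _ => Finset.sum_congr rfl fun i' _ =>
    Finset.sum_congr rfl fun j _ => ?_
  simp only [Matrix.one_apply, mul_ite, mul_one, mul_zero, Finset.sum_ite_eq',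
    Finset.mem_univ, if_true]

lemma trace_mul_right_pt (ρ : Matrix (Fin d₁ × Fin d₂) (Fin d₁ × Fin d₂) ℂ)
    (B : Matrix (Fin d₂) (Fin d₂) ℂ) :
    (ρ * ((1 : Matrix (Fin d₁) (Fin d₁) ℂ) ⊗ₖ B)).trace
      = (Matrix.of (fun j j' => ∑ i, ρ (i, j) (i, j')) * B).trace := by
  rw [trace_mul_kron, Matrix.trace]
  have key : ∀ i : Fin d₁,
      (∑ i', ∑ j, ∑ j', ρ (i, j) (i', j') *
          ((1 : Matrix (Fin d₁) (Fin d₁) ℂ) i' i * B j' j))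
        = ∑ j, ∑ j', ρ (i, j) (i, j') * B j' j := by
    intro i
    rw [Finset.sum_comm]
    refine Finset.sum_congr rfl fun j _ => ?_
    rw [Finset.sum_comm]
    refine Finset.sum_congr rfl fun j' _ => ?_
    simp only [Matrix.one_apply, ite_mul, one_mul, zero_mul, mul_ite, mul_zero,
      Finset.sum_ite_eq', Finset.mem_univ, if_true]
  rw [Finset.sum_congr rfl (fun i _ => key i)]
  simp only [Matrix.diag_apply, Matrix.mul_apply, Matrix.of_apply, Finset.sum_mul]
  rw [Finset.sum_comm]
  exact Finset.sum_congr rfl fun j _ => Finset.sum_comm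

variable {d₁ d₂ : ℕ}

lemma partial_trace_purity (v : Fin d₁ × Fin d₂ → ℂ) :
    ((Matrix.of (fun i i' : Fin d₁ => ∑ j, v (i, j) * (starRingEnd ℂ) (v (i', j)))) *
      (Matrix.of (fun i i' : Fin d₁ => ∑ j, v (i, j) * (starRingEnd ℂ) (v (i', j))))).trace
    = ((Matrix.of (fun j j' : Fin d₂ => ∑ i, v (i, j) * (starRingEnd ℂ) (v (i, j')))) *
      (Matrix.of (fun j j' : Fin d₂ => ∑ i, v (i, j) * (starRingEnd ℂ) (v (i, j'))))).trace := by
  simp only [Matrix.trace, Matrix.diag_apply, Matrix.mul_apply, Matrix.of_apply,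
    Finset.sum_mul, Finset.mul_sum]
  have pack1 : ∀ F : Fin d₁ → Fin d₁ → Fin d₂ → Fin d₂ → ℂ,
      ∑ p : Fin d₁ × Fin d₁ × Fin d₂ × Fin d₂, F p.1 p.2.1 p.2.2.1 p.2.2.2
        = ∑ a, ∑ b, ∑ c, ∑ d, F a b c d := by
    intro F; simp [Fintype.sum_prod_type]
  have pack2 : ∀ F : Fin d₂ → Fin d₂ → Fin d₁ → Fin d₁ → ℂ,
      ∑ p : Fin d₂ × Fin d₂ × Fin d₁ × Fin d₁, F p.1 p.2.1 p.2.2.1 p.2.2.2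
        = ∑ a, ∑ b, ∑ c, ∑ d, F a b c d := by
    intro F; simp [Fintype.sum_prod_type]
  rw [← pack1 (fun a b c d => v (a, d) * (starRingEnd ℂ) (v (b, d)) *
        (v (b, c) * (starRingEnd ℂ) (v (a, c)))),
      ← pack2 (fun a b c d => v (d, a) * (starRingEnd ℂ) (v (d, b)) *
        (v (c, b) * (starRingEnd ℂ) (v (c, a))))]
  refine Fintype.sum_equiv
    ⟨fun p => (p.2.2.2, p.2.2.1, p.2.1, p.1), fun p => (p.2.2.2, p.2.2.1, p.2.1, p.1),
      fun _ => rfl, fun _ => rfl⟩ _ _ fun p => by dsimp; ring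

lemma kron_isHermitian {m n : Type*} [Fintype m] [Fintype n]
    {A : Matrix m m ℂ} {B : Matrix n n ℂ}
    (hA : A.IsHermitian) (hB : B.IsHermitian) : (A ⊗ₖ B).IsHermitian := by
  ext ⟨i, j⟩ ⟨i', j'⟩
  simp only [Matrix.conjTranspose_apply, Matrix.kroneckerMap_apply, star_mul']
  rw [← Matrix.conjTranspose_apply, ← Matrix.conjTranspose_apply, hA, hB]

lemma trace_mul_herm_real {n : Type*} [Fintype n] {ρ M : Matrix n n ℂ}
    (hρ : ρ.IsHermitian) (hM : M.IsHermitian) :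
    ((ρ * M).trace : ℂ) = (((ρ * M).trace).re : ℝ) := by
  have h : star ((ρ * M).trace) = (ρ * M).trace := by
    rw [← Matrix.trace_conjTranspose, Matrix.conjTranspose_mul, hM.eq, hρ.eq,
      Matrix.trace_mul_comm]
  exact ((Complex.conj_eq_iff_re).mp h).symm
lemma sum_option' {α M : Type*} [Fintype α] [AddCommMonoid M] (f : Option α → M) :
    ∑ x : Option α, f x = f none + ∑ x : α, f (some x) := by
  rw [univ_option, Finset.sum_insertNone]

/-- for a pure bipartite state with d₁ ≤ d₂,
‖T^{(12)}‖² = 4(d₂²−1)/d₂² − (2(d₁+d₂)/(d₁d₂))‖T^{(2)}‖². -/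
theorem bipartite_pure_correlation_identity
    (d₁ d₂ : ℕ) (hd₁ : 2 ≤ d₁) (h12 : d₁ ≤ d₂)
    (lam1 : Fin (d₁ ^ 2 - 1) → Matrix (Fin d₁) (Fin d₁) ℂ)
    (lam2 : Fin (d₂ ^ 2 - 1) → Matrix (Fin d₂) (Fin d₂) ℂ)
    (h1herm : ∀ i, (lam1 i).IsHermitian)
    (h1tr : ∀ i, (lam1 i).trace = 0)
    (h1orth : ∀ i j, (lam1 i * lam1 j).trace = if i = j then 2 else 0)
    (h2herm : ∀ i, (lam2 i).IsHermitian)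
    (h2tr : ∀ i, (lam2 i).trace = 0)
    (h2orth : ∀ i j, (lam2 i * lam2 j).trace = if i = j then 2 else 0)
    (ρ : Matrix (Fin d₁ × Fin d₂) (Fin d₁ × Fin d₂) ℂ)
    (hρ : ρ.PosSemidef) (hρtr : ρ.trace = 1) (hpure : ρ * ρ = ρ) :
    ∑ i : Fin (d₁ ^ 2 - 1), ∑ j : Fin (d₂ ^ 2 - 1),
        (Complex.re ((ρ * (lam1 i ⊗ₖ lam2 j)).trace)) ^ 2
      = 4 * ((d₂ : ℝ) ^ 2 - 1) / (d₂ : ℝ) ^ 2 -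
        (2 * ((d₁ : ℝ) + (d₂ : ℝ)) / ((d₁ : ℝ) * (d₂ : ℝ))) *
          ∑ j : Fin (d₂ ^ 2 - 1),
            (Complex.re ((ρ * ((1 : Matrix (Fin d₁) (Fin d₁) ℂ) ⊗ₖ lam2 j)).trace)) ^ 2 := by
  classical
  have hherm : ρ.IsHermitian := hρ.1
  have hd2 : 2 ≤ d₂ := le_trans hd₁ h12
  have hD1 : (d₁ : ℂ) ≠ 0 := Nat.cast_ne_zero.mpr (by omega)
  have hD2 : (d₂ : ℂ) ≠ 0 := Nat.cast_ne_zero.mpr (by omega)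
  have h1le : 1 ≤ d₁ ^ 2 := Nat.one_le_pow 2 d₁ (by omega)
  have h2le : 1 ≤ d₂ ^ 2 := Nat.one_le_pow 2 d₂ (by omega)
  -- partial traces
  obtain ⟨ρ₁, hρ₁⟩ : ∃ M, M = Matrix.of (fun i i' : Fin d₁ => ∑ j, ρ (i, j) (i', j)) :=
    ⟨_, rfl⟩
  obtain ⟨ρ₂, hρ₂⟩ : ∃ M, M = Matrix.of (fun j j' : Fin d₂ => ∑ i, ρ (i, j) (i, j')) :=
    ⟨_, rfl⟩
  have hL : ∀ A, (ρ * (A ⊗ₖ (1 : Matrix (Fin d₂) (Fin d₂) ℂ))).trace = (ρ₁ * A).trace :=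
    fun A => by rw [hρ₁]; exact trace_mul_left_pt ρ A
  have hR : ∀ B, (ρ * ((1 : Matrix (Fin d₁) (Fin d₁) ℂ) ⊗ₖ B)).trace = (ρ₂ * B).trace :=
    fun B => by rw [hρ₂]; exact trace_mul_right_pt ρ B
  have htrρ₁ : ρ₁.trace = 1 := by
    rw [hρ₁, ← hρtr, Matrix.trace, Matrix.trace, Fintype.sum_prod_type]
    rfl
  have htrρ₂ : ρ₂.trace = 1 := by
    rw [hρ₂, ← hρtr, Matrix.trace, Matrix.trace, Fintype.sum_prod_type]
    simp only [Matrix.diag_apply, Matrix.of_apply]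
    exact Finset.sum_comm
  -- purity transfer
  obtain ⟨v, hv⟩ := pure_rank_one ρ hherm hpure hρtr
  have hpt : (ρ₁ * ρ₁).trace = (ρ₂ * ρ₂).trace := by
    have e1 : ρ₁ = Matrix.of (fun i i' : Fin d₁ =>
        ∑ j, v (i, j) * (starRingEnd ℂ) (v (i', j))) := by
      rw [hρ₁]; ext i i'
      simp only [Matrix.of_apply]
      exact Finset.sum_congr rfl fun j _ => hv (i, j) (i', j)
    have e2 : ρ₂ = Matrix.of (fun j j' : Fin d₂ =>
        ∑ i, v (i, j) * (starRingEnd ℂ) (v (i, j'))) := by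
      rw [hρ₂]; ext j j'
      simp only [Matrix.of_apply]
      exact Finset.sum_congr rfl fun i _ => hv (i, j) (i, j')
    rw [e1, e2]; exact partial_trace_purity v
  -- orthogonality of the extended families
  have horth1 : ∀ a b : Option (Fin (d₁ ^ 2 - 1)),
      ((a.elim 1 lam1 : Matrix (Fin d₁) (Fin d₁) ℂ) * b.elim 1 lam1).trace
        = if a = b then a.elim (d₁ : ℂ) (fun _ => 2) else 0 := by
    rintro (_ | i) (_ | j)
    · simp [Matrix.trace_one]
    · simp [h1tr j]
    · simp [h1tr i]
    · simp only [Option.elim_some, h1orth i j, Option.some_inj]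
  have horth2 : ∀ a b : Option (Fin (d₂ ^ 2 - 1)),
      ((a.elim 1 lam2 : Matrix (Fin d₂) (Fin d₂) ℂ) * b.elim 1 lam2).trace
        = if a = b then a.elim (d₂ : ℂ) (fun _ => 2) else 0 := by
    rintro (_ | i) (_ | j)
    · simp [Matrix.trace_one]
    · simp [h2tr j]
    · simp [h2tr i]
    · simp only [Option.elim_some, h2orth i j, Option.some_inj]
  have hcne1 : ∀ a : Option (Fin (d₁ ^ 2 - 1)), (a.elim (d₁ : ℂ) (fun _ => 2)) ≠ 0 := by
    rintro (_ | i) <;> simp [hD1]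
  have hcne2 : ∀ a : Option (Fin (d₂ ^ 2 - 1)), (a.elim (d₂ : ℂ) (fun _ => 2)) ≠ 0 := by
    rintro (_ | i) <;> simp [hD2]
  -- Parseval for ρ₁
  have P1 := parseval_trace (fun o : Option (Fin (d₁ ^ 2 - 1)) => o.elim 1 lam1)
    (fun o => o.elim (d₁ : ℂ) (fun _ => 2)) hcne1 horth1
    (by simp only [Fintype.card_option, Fintype.card_fin]
        rw [Nat.sub_add_cancel h1le, pow_two]) ρ₁
  rw [sum_option'] at P1
  simp only [Option.elim_none, Option.elim_some, Matrix.mul_one, htrρ₁, one_pow,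
    ← Finset.sum_div] at P1
  -- Parseval for ρ₂
  have P2 := parseval_trace (fun o : Option (Fin (d₂ ^ 2 - 1)) => o.elim 1 lam2)
    (fun o => o.elim (d₂ : ℂ) (fun _ => 2)) hcne2 horth2
    (by simp only [Fintype.card_option, Fintype.card_fin]
        rw [Nat.sub_add_cancel h2le, pow_two]) ρ₂
  rw [sum_option'] at P2
  simp only [Option.elim_none, Option.elim_some, Matrix.mul_one, htrρ₂, one_pow,
    ← Finset.sum_div] at P2
  -- Parseval for ρ
  have P3 := parseval_trace
    (fun p : Option (Fin (d₁ ^ 2 - 1)) × Option (Fin (d₂ ^ 2 - 1)) =>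
      (p.1.elim 1 lam1) ⊗ₖ (p.2.elim 1 lam2))
    (fun p => (p.1.elim (d₁ : ℂ) (fun _ => 2)) * (p.2.elim (d₂ : ℂ) (fun _ => 2)))
    (fun p => mul_ne_zero (hcne1 p.1) (hcne2 p.2))
    (by
      intro p q
      rw [← Matrix.mul_kronecker_mul, Matrix.trace_kronecker, horth1 p.1 q.1, horth2 p.2 q.2]
      by_cases h1 : p.1 = q.1 <;> by_cases h2 : p.2 = q.2 <;>
        simp [Prod.ext_iff, h1, h2])
    (by
      simp only [Fintype.card_prod, Fintype.card_option, Fintype.card_fin]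
      rw [Nat.sub_add_cancel h1le, Nat.sub_add_cancel h2le]
      ring) ρ
  rw [hpure, hρtr, Fintype.sum_prod_type, sum_option'] at P3
  simp only [sum_option'] at P3
  simp only [Option.elim_none, Option.elim_some, Matrix.one_kronecker_one, Matrix.mul_one,
    hρtr, one_pow, Finset.sum_add_distrib, ← Finset.sum_div] at P3
  -- the three complex sums
  set X : ℂ := ∑ i, ((ρ * (lam1 i ⊗ₖ (1 : Matrix (Fin d₂) (Fin d₂) ℂ))).trace) ^ 2 with hX
  set Y : ℂ := ∑ j, ((ρ * ((1 : Matrix (Fin d₁) (Fin d₁) ℂ) ⊗ₖ lam2 j)).trace) ^ 2 with hY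
  set Z : ℂ := ∑ i, ∑ j, ((ρ * (lam1 i ⊗ₖ lam2 j)).trace) ^ 2 with hZ
  have hXalt : X = ∑ i, ((ρ₁ * lam1 i)).trace ^ 2 :=
    Finset.sum_congr rfl fun i _ => by rw [hL]
  have hYalt : Y = ∑ j, ((ρ₂ * lam2 j)).trace ^ 2 :=
    Finset.sum_congr rfl fun j _ => by rw [hR]
  have E23 : 1 / (d₁ : ℂ) + X / 2 = 1 / (d₂ : ℂ) + Y / 2 := by
    rw [hXalt, hYalt, ← P1, ← P2]; exact hpt
  have hXY : X = Y + 2 / (d₂ : ℂ) - 2 / (d₁ : ℂ) := by linear_combination 2 * E23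
  have hZ4 : Z = 4 - 4 / ((d₁ : ℂ) * d₂) - 2 * Y / d₁ - 2 * X / d₂ := by
    linear_combination (-4 : ℂ) * P3
  have final_c : Z = 4 * ((d₂ : ℂ) ^ 2 - 1) / (d₂ : ℂ) ^ 2 -
      (2 * ((d₁ : ℂ) + (d₂ : ℂ)) / ((d₁ : ℂ) * (d₂ : ℂ))) * Y := by
    rw [hZ4, hXY]; field_simp; ring
  -- reality
  have h2r : ∀ j, ((ρ * ((1 : Matrix (Fin d₁) (Fin d₁) ℂ) ⊗ₖ lam2 j)).trace)
      = (((ρ * ((1 : Matrix (Fin d₁) (Fin d₁) ℂ) ⊗ₖ lam2 j)).trace).re : ℂ) :=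
    fun j => trace_mul_herm_real hherm (kron_isHermitian Matrix.isHermitian_one (h2herm j))
  have h12r : ∀ i j, ((ρ * (lam1 i ⊗ₖ lam2 j)).trace)
      = (((ρ * (lam1 i ⊗ₖ lam2 j)).trace).re : ℂ) :=
    fun i j => trace_mul_herm_real hherm (kron_isHermitian (h1herm i) (h2herm j))
  have hYr : Y = ((∑ j, (((ρ * ((1 : Matrix (Fin d₁) (Fin d₁) ℂ) ⊗ₖ lam2 j)).trace).re) ^ 2
      : ℝ) : ℂ) := by
    rw [hY]; push_cast
    exact Finset.sum_congr rfl fun j _ => congrArg (· ^ 2) (h2r j)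
  have hZr : Z = ((∑ i, ∑ j, (((ρ * (lam1 i ⊗ₖ lam2 j)).trace).re) ^ 2 : ℝ) : ℂ) := by
    rw [hZ]; push_cast
    exact Finset.sum_congr rfl fun i _ => Finset.sum_congr rfl fun j _ =>
      congrArg (· ^ 2) (h12r i j)
  rw [hYr, hZr] at final_c
  apply Complex.ofReal_injective
  rw [final_c]
  push_cast
  ring
end

section
/- If a mixed state ρ on H₁^{d₁}⊗H₂^{d₂}⊗H₃^{d₃} is fully separable (ρ = Σ_l p_l ρ_l^{(f)}⊗ρ_l^{(g)}⊗ρ_l^{(h)}), then the matrix S(ρ_{f|g|h}) = [[(T^{(h)})ᵗ, (T^{(gh)})ᵗ],[T^{(fh)}, T^{(fgh)}]] satisfies ‖S(ρ_{f|g|h})‖_tr ≤ (2(d_h−1)/d_h)·√((3d_f−2)(3d_g−2)/(d_f d_g)). -/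
open Matrix BigOperators
open scoped Kronecker ComplexOrder

/-- Trace (nuclear) norm of a real rectangular matrix: tr √(AᵀA). -/
noncomputable def traceNorm {m n : Type*} [Fintype m] [Fintype n] [DecidableEq n]
    (A : Matrix m n ℝ) : ℝ :=
  ((((Matrix.posSemidef_conjTranspose_mul_self A).1.eigenvectorUnitary : Matrix n n ℝ) *
      diagonal ((RCLike.ofReal : ℝ → ℝ) ∘ (√·) ∘ (Matrix.posSemidef_conjTranspose_mul_self A).1.eigenvalues) *
      (star (Matrix.posSemidef_conjTranspose_mul_self A).1.eigenvectorUnitary : Matrix n n ℝ))).trace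

section Aux

variable {m n : Type*} [Fintype m] [Fintype n] [DecidableEq n]

lemma exists_contraction' (M : Matrix m n ℝ) :
    ∃ P : Matrix m n ℝ, (Pᴴ * M).trace = traceNorm M ∧
      ∀ b : n → ℝ, (P *ᵥ b) ⬝ᵥ (P *ᵥ b) ≤ b ⬝ᵥ b := by
  have hH := Matrix.posSemidef_conjTranspose_mul_self M
  set U : Matrix n n ℝ := (hH.1.eigenvectorUnitary : Matrix n n ℝ) with hUdef
  set e : n → ℝ := fun i => Real.sqrt (hH.1.eigenvalues i) with hedef
  set S : Matrix n n ℝ := U * Matrix.diagonal e * star U with hSdef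
  have hUU : star U * U = 1 := Matrix.mem_unitaryGroup_iff'.mp (hH.1.eigenvectorUnitary).2
  have hUU' : U * star U = 1 := Matrix.mem_unitaryGroup_iff.mp (hH.1.eigenvectorUnitary).2
  have hspec : S = U * Matrix.diagonal e * star U := rfl
  have conj_mul : ∀ d1 d2 : n → ℝ,
      (U * Matrix.diagonal d1 * star U) * (U * Matrix.diagonal d2 * star U)
        = U * Matrix.diagonal (fun i => d1 i * d2 i) * star U := by
    intro d1 d2
    have h : (U * Matrix.diagonal d1 * star U) * (U * Matrix.diagonal d2 * star U)
        = U * (Matrix.diagonal d1 * ((star U * U) * Matrix.diagonal d2)) * star U := by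
      noncomm_ring
    rw [h, hUU, one_mul, Matrix.diagonal_mul_diagonal]
  set einv : n → ℝ := fun i => if e i = 0 then 0 else (e i)⁻¹ with heinv
  set X : Matrix n n ℝ := U * Matrix.diagonal einv * star U with hXdef
  have hMM : Mᴴ * M = U * Matrix.diagonal (fun i => e i * e i) * star U := by
    have hfe : (fun i => e i * e i) = (RCLike.ofReal ∘ hH.1.eigenvalues : n → ℝ) := by
      funext i
      simp [hedef]
      exact Real.mul_self_sqrt (hH.eigenvalues_nonneg i)
    have h0 := hH.1.spectral_theorem
    rw [Unitary.conjStarAlgAut_apply] at h0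
    rw [hfe]
    exact h0
  set P : Matrix m n ℝ := M * X with hPdef
  have hXherm : Xᴴ = X := by
    rw [hXdef]
    simp [Matrix.conjTranspose_mul, Matrix.diagonal_conjTranspose,
      Matrix.star_eq_conjTranspose, Matrix.conjTranspose_eq_transpose_of_trivial,
      Matrix.transpose_transpose, Matrix.mul_assoc]
  have hfun : (fun i => einv i * (e i * e i)) = e := by
    funext i
    simp only [heinv]
    by_cases h : e i = 0
    · simp [h]
    · simp only [if_neg h]
      field_simp
  have key : X * (Mᴴ * M) = S := by
    calc X * (Mᴴ * M)
        = U * Matrix.diagonal (fun i => einv i * (e i * e i)) * star U := by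
          rw [hXdef, hMM]; exact conj_mul _ _
      _ = U * Matrix.diagonal e * star U := by rw [hfun]
      _ = S := hspec.symm
  have hPM : Pᴴ * M = S := by
    rw [hPdef, Matrix.conjTranspose_mul, hXherm, Matrix.mul_assoc, key]
  refine ⟨P, by rw [hPM]; rfl, ?_⟩
  have hPP : Pᴴ * P = U * Matrix.diagonal (fun i => if e i = 0 then 0 else 1) * star U := by
    have h0 : Pᴴ * P = S * X := by
      rw [hPdef, Matrix.conjTranspose_mul, hXherm, Matrix.mul_assoc X Mᴴ (M * X),
        ← Matrix.mul_assoc Mᴴ M X, ← Matrix.mul_assoc X (Mᴴ * M) X, key]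
    have hchi : (fun i => e i * einv i) = (fun i => if e i = 0 then 0 else (1:ℝ)) := by
      funext i
      simp only [heinv]
      by_cases h : e i = 0
      · simp [h]
      · simp only [if_neg h]
        field_simp
    calc Pᴴ * P = S * X := h0
      _ = U * Matrix.diagonal (fun i => e i * einv i) * star U := by
          rw [hspec, hXdef]; exact conj_mul _ _
      _ = U * Matrix.diagonal (fun i => if e i = 0 then 0 else 1) * star U := by rw [hchi]
  intro b
  have h1 : (P *ᵥ b) ⬝ᵥ (P *ᵥ b) = ((Pᴴ * P) *ᵥ b) ⬝ᵥ b := by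
    rw [Matrix.dotProduct_mulVec, ← Matrix.mulVec_transpose, Matrix.mulVec_mulVec,
      Matrix.conjTranspose_eq_transpose_of_trivial]
  rw [h1, hPP]
  set c : n → ℝ := (star U) *ᵥ b with hcdef
  have h2 : ((U * Matrix.diagonal (fun i => if e i = 0 then 0 else 1) * star U) *ᵥ b) ⬝ᵥ b
      = (Matrix.diagonal (fun i => if e i = 0 then 0 else 1) *ᵥ c) ⬝ᵥ c := by
    rw [← Matrix.mulVec_mulVec, ← Matrix.mulVec_mulVec, Matrix.dotProduct_mulVec,
      ← Matrix.mulVec_transpose]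
    congr 1
  have h3 : b ⬝ᵥ b = c ⬝ᵥ c := by
    rw [hcdef, Matrix.dotProduct_mulVec, ← Matrix.mulVec_transpose, Matrix.mulVec_mulVec]
    rw [Matrix.star_eq_conjTranspose, Matrix.conjTranspose_eq_transpose_of_trivial,
      Matrix.transpose_transpose]
    have h4 : U * Uᵀ = 1 := by
      rw [← Matrix.conjTranspose_eq_transpose_of_trivial, ← Matrix.star_eq_conjTranspose]
      exact hUU'
    rw [h4, Matrix.one_mulVec]
  rw [h2, h3]
  simp only [Matrix.mulVec_diagonal, dotProduct]
  apply Finset.sum_le_sum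
  intro i _
  by_cases h : e i = 0
  · simp [h, mul_self_nonneg]
  · simp [h]

lemma dot_cauchy' {ι : Type*} [Fintype ι] (a x : ι → ℝ) :
    a ⬝ᵥ x ≤ Real.sqrt (a ⬝ᵥ a) * Real.sqrt (x ⬝ᵥ x) := by
  have h := Finset.sum_mul_sq_le_sq_mul_sq Finset.univ a x
  have h2 : a ⬝ᵥ x ≤ Real.sqrt ((a ⬝ᵥ x) ^ 2) := by
    rw [Real.sqrt_sq_eq_abs]; exact le_abs_self _
  refine h2.trans ?_
  have ha : a ⬝ᵥ a = ∑ i, a i ^ 2 := by simp [dotProduct, sq]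
  have hx : x ⬝ᵥ x = ∑ i, x i ^ 2 := by simp [dotProduct, sq]
  rw [ha, hx, ← Real.sqrt_mul (by positivity : (0:ℝ) ≤ ∑ i, a i ^ 2)]
  exact Real.sqrt_le_sqrt (by simpa [dotProduct] using h)

lemma traceNorm_le_of_eq_sum' {L : ℕ} (A : Matrix m n ℝ) (c : Fin L → ℝ) (hc : ∀ l, 0 ≤ c l)
    (a : Fin L → m → ℝ) (b : Fin L → n → ℝ)
    (hA : A = ∑ l, c l • Matrix.vecMulVec (a l) (b l)) :
    traceNorm A ≤ ∑ l, c l * (Real.sqrt (a l ⬝ᵥ a l) * Real.sqrt (b l ⬝ᵥ b l)) := by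
  obtain ⟨P, hPt, hPc⟩ := exists_contraction' A
  rw [← hPt, hA, Matrix.mul_sum, Matrix.trace_sum]
  apply Finset.sum_le_sum
  intro l _
  have hterm : (Pᴴ * (c l • Matrix.vecMulVec (a l) (b l))).trace = c l * (a l ⬝ᵥ (P *ᵥ b l)) := by
    rw [Matrix.mul_smul, Matrix.trace_smul, smul_eq_mul]
    congr 1
    simp only [Matrix.trace, Matrix.diag, Matrix.mul_apply, Matrix.conjTranspose_apply,
      Matrix.vecMulVec_apply, dotProduct, Matrix.mulVec, star_trivial]
    rw [Finset.sum_comm]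
    apply Finset.sum_congr rfl
    intro i _
    rw [Finset.mul_sum]
    apply Finset.sum_congr rfl
    intro j _
    ring
  rw [hterm]
  apply mul_le_mul_of_nonneg_left _ (hc l)
  refine (dot_cauchy' _ _).trans ?_
  apply mul_le_mul_of_nonneg_left _ (Real.sqrt_nonneg _)
  exact Real.sqrt_le_sqrt (hPc (b l))

lemma herm_trace_real' {d : ℕ} {A B : Matrix (Fin d) (Fin d) ℂ}
    (hA : A.IsHermitian) (hB : B.IsHermitian) :
    (A * B).trace = (((A * B).trace).re : ℂ) := by
  have h : (starRingEnd ℂ) ((A * B).trace) = (A * B).trace := by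
    have := Matrix.trace_conjTranspose (A * B)
    rw [Matrix.conjTranspose_mul, hA.eq, hB.eq, Matrix.trace_mul_comm] at this
    exact this.symm
  exact (Complex.conj_eq_iff_re.mp h).symm

lemma trace_sq_le_one' {d : ℕ} {σ : Matrix (Fin d) (Fin d) ℂ}
    (hp : σ.PosSemidef) (ht : σ.trace = 1) : ((σ * σ).trace).re ≤ 1 := by
  have hH : σ.IsHermitian := hp.1
  set U : Matrix (Fin d) (Fin d) ℂ := (hH.eigenvectorUnitary : Matrix (Fin d) (Fin d) ℂ) with hU
  set e : Fin d → ℝ := hH.eigenvalues with he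
  have hUU : star U * U = 1 := Matrix.mem_unitaryGroup_iff'.mp hH.eigenvectorUnitary.2
  have hspec : σ = U * Matrix.diagonal (fun i => (e i : ℂ)) * star U := by
    have := hH.spectral_theorem
    rw [Unitary.conjStarAlgAut_apply] at this
    exact this
  have h1 : σ * σ = U * Matrix.diagonal (fun i => (e i : ℂ) * (e i : ℂ)) * star U := by
    rw [hspec]
    have h : U * Matrix.diagonal (fun i => (e i : ℂ)) * star U *
        (U * Matrix.diagonal (fun i => (e i : ℂ)) * star U)
        = U * (Matrix.diagonal (fun i => (e i : ℂ)) * ((star U * U) *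
            Matrix.diagonal (fun i => (e i : ℂ)))) * star U := by noncomm_ring
    rw [h, hUU, one_mul, Matrix.diagonal_mul_diagonal]
  have htrconj : ∀ f : Fin d → ℂ, (U * Matrix.diagonal f * star U).trace = ∑ i, f i := by
    intro f
    rw [Matrix.trace_mul_cycle, hUU, one_mul, Matrix.trace_diagonal]
  have hsum1 : ∑ i, e i = 1 := by
    have h2 : σ.trace = ∑ i, (e i : ℂ) := by rw [hspec, htrconj]
    rw [ht] at h2
    have := congrArg Complex.re h2
    simpa using this.symm
  have h3 : ((σ * σ).trace).re = ∑ i, e i ^ 2 := by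
    rw [h1, htrconj]
    push_cast
    simp [sq]
  rw [h3]
  calc ∑ i, e i ^ 2 ≤ (∑ i, e i) ^ 2 :=
        Finset.sum_sq_le_sq_sum_of_nonneg (fun i _ => hp.eigenvalues_nonneg i)
    _ = 1 := by rw [hsum1]; norm_num

lemma bloch_bound' {d N : ℕ} (hd : 1 ≤ d) (lam : Fin N → Matrix (Fin d) (Fin d) ℂ)
    (hherm : ∀ i, (lam i).IsHermitian) (htr : ∀ i, (lam i).trace = 0)
    (horth : ∀ i j, (lam i * lam j).trace = if i = j then 2 else 0)
    (σ : Matrix (Fin d) (Fin d) ℂ) (hpsd : σ.PosSemidef) (htr1 : σ.trace = 1) :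
    ∑ i, ((σ * lam i).trace).re ^ 2 ≤ 2 * ((d:ℝ) - 1) / d := by
  have hdC : (d : ℂ) ≠ 0 := by positivity
  set T : Fin N → ℝ := fun i => ((σ * lam i).trace).re with hT
  have hTr : ∀ i, (σ * lam i).trace = (T i : ℂ) := fun i => herm_trace_real' hpsd.1 (hherm i)
  set R : Matrix (Fin d) (Fin d) ℂ :=
    σ - (d : ℂ)⁻¹ • 1 - (2 : ℂ)⁻¹ • ∑ i, (T i : ℂ) • lam i with hR
  -- traces against lam j vanish
  have htrRlam : ∀ j, (R * lam j).trace = 0 := by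
    intro j
    rw [hR, Matrix.sub_mul, Matrix.sub_mul, Matrix.smul_mul, Matrix.smul_mul, one_mul,
      Matrix.trace_sub, Matrix.trace_sub, Matrix.trace_smul, Matrix.trace_smul,
      Matrix.sum_mul, Matrix.trace_sum]
    simp only [Matrix.smul_mul, Matrix.trace_smul, smul_eq_mul, hTr, htr, horth]
    have hs : ∑ x : Fin N, (T x : ℂ) * (if x = j then 2 else 0) = (T j : ℂ) * 2 := by simp
    rw [hs]
    ring
  have htrR : R.trace = 0 := by
    rw [hR, Matrix.trace_sub, Matrix.trace_sub, Matrix.trace_smul, Matrix.trace_smul,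
      Matrix.trace_sum, htr1, Matrix.trace_one]
    simp only [smul_eq_mul]
    rw [Finset.sum_congr rfl (fun i _ => by rw [Matrix.trace_smul, htr i, smul_zero])]
    simp [hdC]
  have htrRsig : (R * σ).trace
      = (σ * σ).trace - (d : ℂ)⁻¹ - (2 : ℂ)⁻¹ * ∑ i, (T i : ℂ) ^ 2 := by
    rw [hR, Matrix.sub_mul, Matrix.sub_mul, Matrix.smul_mul, Matrix.smul_mul, one_mul,
      Matrix.trace_sub, Matrix.trace_sub, Matrix.trace_smul, Matrix.trace_smul,
      Matrix.sum_mul, Matrix.trace_sum, htr1]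
    simp only [smul_eq_mul, mul_one]
    congr 1
    congr 1
    apply Finset.sum_congr rfl
    intro i _
    rw [Matrix.smul_mul, Matrix.trace_smul, Matrix.trace_mul_comm, hTr i, smul_eq_mul]
    ring
  have hRR : (R * R).trace = (R * σ).trace := by
    have hexp : R * R = R * σ - (d : ℂ)⁻¹ • R - (2 : ℂ)⁻¹ • ∑ i, (T i : ℂ) • (R * lam i) := by
      rw [hR]
      conv_lhs => rw [show R * ((σ - (d : ℂ)⁻¹ • 1 - (2 : ℂ)⁻¹ • ∑ i, (T i : ℂ) • lam i))
        = R * σ - (d : ℂ)⁻¹ • (R * 1) - (2 : ℂ)⁻¹ • (R * ∑ i, (T i : ℂ) • lam i) by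
          rw [Matrix.mul_sub, Matrix.mul_sub, Matrix.mul_smul, Matrix.mul_smul]]
      rw [mul_one, Matrix.mul_sum]
      congr 2
      apply Finset.sum_congr rfl
      intro i _
      rw [Matrix.mul_smul]
    rw [hexp, Matrix.trace_sub, Matrix.trace_sub, Matrix.trace_smul, Matrix.trace_smul,
      Matrix.trace_sum, htrR]
    rw [Finset.sum_congr rfl (fun i _ => by rw [Matrix.trace_smul, htrRlam i, smul_zero])]
    simp
  -- positivity of trace(Rᴴ R)
  have hRherm : Rᴴ = R := by
    rw [hR]
    simp only [Matrix.conjTranspose_sub, Matrix.conjTranspose_smul, Matrix.conjTranspose_sum,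
      Matrix.conjTranspose_one, hpsd.1.eq]
    congr 1
    · congr 1
      simp [Complex.star_def, map_inv₀, Complex.conj_natCast]
    · congr 1
      · simp [Complex.star_def]
      · apply Finset.sum_congr rfl
        intro i _
        rw [(hherm i).eq]
        congr 1
        simp [Complex.star_def, Complex.conj_ofReal]
  have hpos : 0 ≤ ((Rᴴ * R).trace).re := by
    simp only [Matrix.trace, Matrix.diag, Matrix.mul_apply, Matrix.conjTranspose_apply]
    rw [Complex.re_sum]
    apply Finset.sum_nonneg
    intro i _
    rw [Complex.re_sum]
    apply Finset.sum_nonneg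
    intro j _
    rw [Complex.star_def, ← Complex.normSq_eq_conj_mul_self]
    exact Complex.normSq_nonneg _
  rw [hRherm, hRR, htrRsig] at hpos
  have h2c : ((2 : ℂ)⁻¹ * ∑ i, (T i : ℂ) ^ 2) = (((2 : ℝ)⁻¹ * ∑ i, T i ^ 2 : ℝ) : ℂ) := by
    push_cast; ring
  have hdc : ((d : ℂ)⁻¹) = (((d : ℝ)⁻¹ : ℝ) : ℂ) := by push_cast; ring
  rw [h2c, hdc, Complex.sub_re, Complex.sub_re, Complex.ofReal_re, Complex.ofReal_re] at hpos
  have hd1 : (1 : ℝ) ≤ (d : ℝ) := by exact_mod_cast hd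
  have hdR : (d : ℝ) ≠ 0 := by positivity
  have hkey : (2 : ℝ) * ((d : ℝ) - 1) / (d : ℝ) = 2 * (1 - (d : ℝ)⁻¹) := by
    field_simp
  rw [hkey]
  have hσσ := trace_sq_le_one' hpsd htr1
  nlinarith [hpos, hσσ]

end Aux

set_option maxHeartbeats 1600000 in
/-- if a tripartite state ρ is fully separable, then
‖S(ρ_{f|g|h})‖_tr ≤ (2(d_h−1)/d_h)·√((3d_f−2)(3d_g−2)/(d_f d_g)). -/
theorem fully_separable_trace_norm_bound
    (df dg dh : ℕ) (hdf : 2 ≤ df) (hdg : 2 ≤ dg) (hdh : 2 ≤ dh)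
    (lamf : Fin (df ^ 2 - 1) → Matrix (Fin df) (Fin df) ℂ)
    (lamg : Fin (dg ^ 2 - 1) → Matrix (Fin dg) (Fin dg) ℂ)
    (lamh : Fin (dh ^ 2 - 1) → Matrix (Fin dh) (Fin dh) ℂ)
    (hfherm : ∀ i, (lamf i).IsHermitian) (hftr : ∀ i, (lamf i).trace = 0)
    (hforth : ∀ i j, (lamf i * lamf j).trace = if i = j then 2 else 0)
    (hgherm : ∀ i, (lamg i).IsHermitian) (hgtr : ∀ i, (lamg i).trace = 0)
    (hgorth : ∀ i j, (lamg i * lamg j).trace = if i = j then 2 else 0)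
    (hhherm : ∀ i, (lamh i).IsHermitian) (hhtr : ∀ i, (lamh i).trace = 0)
    (hhorth : ∀ i j, (lamh i * lamh j).trace = if i = j then 2 else 0)
    (ρ : Matrix (Fin df × Fin dg × Fin dh) (Fin df × Fin dg × Fin dh) ℂ)
    (L : ℕ) (p : Fin L → ℝ) (hp : ∀ l, 0 < p l) (hpsum : ∑ l, p l = 1)
    (σf : Fin L → Matrix (Fin df) (Fin df) ℂ)
    (hσf : ∀ l, (σf l).PosSemidef ∧ (σf l).trace = 1)
    (σg : Fin L → Matrix (Fin dg) (Fin dg) ℂ)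
    (hσg : ∀ l, (σg l).PosSemidef ∧ (σg l).trace = 1)
    (σh : Fin L → Matrix (Fin dh) (Fin dh) ℂ)
    (hσh : ∀ l, (σh l).PosSemidef ∧ (σh l).trace = 1)
    (hsep : ρ = ∑ l, (p l : ℂ) • (σf l ⊗ₖ (σg l ⊗ₖ σh l))) :
    traceNorm (Matrix.of fun (i : Option (Fin (df ^ 2 - 1)))
        (j : Fin (dh ^ 2 - 1) ⊕ Fin (dg ^ 2 - 1) × Fin (dh ^ 2 - 1)) =>
      match i, j with
      | none, Sum.inl k =>
          Complex.re ((ρ * ((1 : Matrix (Fin df) (Fin df) ℂ) ⊗ₖ ((1 : Matrix (Fin dg) (Fin dg) ℂ) ⊗ₖ lamh k))).trace)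
      | none, Sum.inr (j, k) =>
          Complex.re ((ρ * ((1 : Matrix (Fin df) (Fin df) ℂ) ⊗ₖ (lamg j ⊗ₖ lamh k))).trace)
      | some i, Sum.inl k =>
          Complex.re ((ρ * (lamf i ⊗ₖ ((1 : Matrix (Fin dg) (Fin dg) ℂ) ⊗ₖ lamh k))).trace)
      | some i, Sum.inr (j, k) =>
          Complex.re ((ρ * (lamf i ⊗ₖ (lamg j ⊗ₖ lamh k))).trace))
      ≤ (2 * ((dh : ℝ) - 1) / (dh : ℝ)) *
          Real.sqrt ((3 * (df : ℝ) - 2) * (3 * (dg : ℝ) - 2) / ((df : ℝ) * (dg : ℝ))) := by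
  -- Bloch vectors of the local states
  set u : Fin L → Fin (df ^ 2 - 1) → ℝ := fun l i => ((σf l * lamf i).trace).re with hu
  set v : Fin L → Fin (dg ^ 2 - 1) → ℝ := fun l j => ((σg l * lamg j).trace).re with hv
  set w : Fin L → Fin (dh ^ 2 - 1) → ℝ := fun l k => ((σh l * lamh k).trace).re with hw
  have huC : ∀ l i, (σf l * lamf i).trace = (u l i : ℂ) :=
    fun l i => herm_trace_real' (hσf l).1.1 (hfherm i)
  have hvC : ∀ l j, (σg l * lamg j).trace = (v l j : ℂ) :=
    fun l j => herm_trace_real' (hσg l).1.1 (hgherm j)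
  have hwC : ∀ l k, (σh l * lamh k).trace = (w l k : ℂ) :=
    fun l k => herm_trace_real' (hσh l).1.1 (hhherm k)
  set a : Fin L → Option (Fin (df ^ 2 - 1)) → ℝ := fun l o => o.elim 1 (u l) with ha
  set b : Fin L → (Fin (dh ^ 2 - 1) ⊕ Fin (dg ^ 2 - 1) × Fin (dh ^ 2 - 1)) → ℝ :=
    fun l => Sum.elim (w l) (fun jk => v l jk.1 * w l jk.2) with hb
  -- the key trace identity
  have hmain : ∀ (A : Matrix (Fin df) (Fin df) ℂ) (B : Matrix (Fin dg) (Fin dg) ℂ)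
      (C : Matrix (Fin dh) (Fin dh) ℂ),
      (ρ * (A ⊗ₖ (B ⊗ₖ C))).trace
        = ∑ l, (p l : ℂ) * ((σf l * A).trace * ((σg l * B).trace * (σh l * C).trace)) := by
    intro A B C
    rw [hsep, Matrix.sum_mul, Matrix.trace_sum]
    apply Finset.sum_congr rfl
    intro l _
    rw [Matrix.smul_mul, Matrix.trace_smul, ← Matrix.mul_kronecker_mul, ← Matrix.mul_kronecker_mul,
      Matrix.trace_kronecker, Matrix.trace_kronecker, smul_eq_mul]
  -- decomposition of the S-matrix as a sum of rank-one matrices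
  have hSdec : (Matrix.of fun (i : Option (Fin (df ^ 2 - 1)))
        (j : Fin (dh ^ 2 - 1) ⊕ Fin (dg ^ 2 - 1) × Fin (dh ^ 2 - 1)) =>
      match i, j with
      | none, Sum.inl k =>
          Complex.re ((ρ * ((1 : Matrix (Fin df) (Fin df) ℂ) ⊗ₖ ((1 : Matrix (Fin dg) (Fin dg) ℂ) ⊗ₖ lamh k))).trace)
      | none, Sum.inr (j, k) =>
          Complex.re ((ρ * ((1 : Matrix (Fin df) (Fin df) ℂ) ⊗ₖ (lamg j ⊗ₖ lamh k))).trace)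
      | some i, Sum.inl k =>
          Complex.re ((ρ * (lamf i ⊗ₖ ((1 : Matrix (Fin dg) (Fin dg) ℂ) ⊗ₖ lamh k))).trace)
      | some i, Sum.inr (j, k) =>
          Complex.re ((ρ * (lamf i ⊗ₖ (lamg j ⊗ₖ lamh k))).trace))
      = ∑ l, p l • Matrix.vecMulVec (a l) (b l) := by
    ext i j
    have hrhs : (∑ l, p l • Matrix.vecMulVec (a l) (b l)) i j
        = ∑ l, p l * (a l i * b l j) := by
      simp [Matrix.sum_apply, Matrix.vecMulVec_apply, mul_assoc]
    rw [hrhs]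
    have hσf1 : ∀ l, (σf l * 1).trace = ((1:ℝ):ℂ) := by
      intro l; rw [mul_one, (hσf l).2]; norm_num
    have hσg1 : ∀ l, (σg l * 1).trace = ((1:ℝ):ℂ) := by
      intro l; rw [mul_one, (hσg l).2]; norm_num
    match i, j with
    | none, Sum.inl k =>
      dsimp only [Matrix.of_apply]
      rw [hmain]
      rw [Complex.re_sum]
      apply Finset.sum_congr rfl
      intro l _
      rw [hσf1, hσg1, hwC]
      have : (p l : ℂ) * (((1:ℝ):ℂ) * (((1:ℝ):ℂ) * (w l k : ℂ)))
          = ((p l * (1 * (1 * w l k)) : ℝ) : ℂ) := by push_cast; ring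
      rw [this, Complex.ofReal_re]
      simp [ha, hb]
    | none, Sum.inr (j, k) =>
      dsimp only [Matrix.of_apply]
      rw [hmain]
      rw [Complex.re_sum]
      apply Finset.sum_congr rfl
      intro l _
      rw [hσf1, hvC, hwC]
      have : (p l : ℂ) * (((1:ℝ):ℂ) * ((v l j : ℂ) * (w l k : ℂ)))
          = ((p l * (1 * (v l j * w l k)) : ℝ) : ℂ) := by push_cast; ring
      rw [this, Complex.ofReal_re]
      simp [ha, hb]
    | some i, Sum.inl k =>
      dsimp only [Matrix.of_apply]
      rw [hmain]
      rw [Complex.re_sum]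
      apply Finset.sum_congr rfl
      intro l _
      rw [hσg1, huC, hwC]
      have : (p l : ℂ) * ((u l i : ℂ) * (((1:ℝ):ℂ) * (w l k : ℂ)))
          = ((p l * (u l i * (1 * w l k)) : ℝ) : ℂ) := by push_cast; ring
      rw [this, Complex.ofReal_re]
      simp [ha, hb]
    | some i, Sum.inr (j, k) =>
      dsimp only [Matrix.of_apply]
      rw [hmain]
      rw [Complex.re_sum]
      apply Finset.sum_congr rfl
      intro l _
      rw [huC, hvC, hwC]
      have : (p l : ℂ) * ((u l i : ℂ) * ((v l j : ℂ) * (w l k : ℂ)))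
          = ((p l * (u l i * (v l j * w l k)) : ℝ) : ℂ) := by push_cast; ring
      rw [this, Complex.ofReal_re]
      simp [ha, hb, mul_assoc]
  -- apply the trace-norm bound
  have hbound := traceNorm_le_of_eq_sum' _ p (fun l => (hp l).le) a b hSdec
  refine hbound.trans ?_
  -- numeric facts
  have hdfR : (1:ℝ) ≤ (df:ℝ) := by exact_mod_cast (le_trans one_le_two hdf)
  have hdgR : (1:ℝ) ≤ (dg:ℝ) := by exact_mod_cast (le_trans one_le_two hdg)
  have hdhR : (2:ℝ) ≤ (dh:ℝ) := by exact_mod_cast hdh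
  have hdf0 : (0:ℝ) < df := by linarith
  have hdg0 : (0:ℝ) < dg := by linarith
  have hdh0 : (0:ℝ) < dh := by linarith
  set Cf : ℝ := (3 * (df:ℝ) - 2) / df with hCf
  set Cg : ℝ := (3 * (dg:ℝ) - 2) / dg with hCg
  set Ch : ℝ := 2 * ((dh:ℝ) - 1) / dh with hCh
  have hCf0 : 0 ≤ Cf := by
    rw [hCf]; apply div_nonneg <;> linarith
  have hCg0 : 0 ≤ Cg := by
    rw [hCg]; apply div_nonneg <;> linarith
  have hCh1 : 1 ≤ Ch := by
    rw [hCh, le_div_iff₀ hdh0]; linarith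
  have hCh0 : 0 ≤ Ch := le_trans zero_le_one hCh1
  -- per-term bounds
  have hterm : ∀ l, Real.sqrt (a l ⬝ᵥ a l) * Real.sqrt (b l ⬝ᵥ b l)
      ≤ Ch * Real.sqrt (Cf * Cg) := by
    intro l
    have haa : a l ⬝ᵥ a l = 1 + ∑ i, u l i ^ 2 := by
      simp [dotProduct, Fintype.sum_option, ha, sq]
    have hbb : b l ⬝ᵥ b l = (∑ k, w l k ^ 2) + (∑ j, v l j ^ 2) * (∑ k, w l k ^ 2) := by
      simp only [dotProduct, hb, Fintype.sum_sum_type, Sum.elim_inl, Sum.elim_inr]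
      congr 1
      · apply Finset.sum_congr rfl; intro k _; ring
      · rw [Fintype.sum_prod_type, Finset.sum_mul]
        apply Finset.sum_congr rfl; intro j _
        rw [Finset.mul_sum]
        apply Finset.sum_congr rfl; intro k _
        ring
    have hubd : ∑ i, u l i ^ 2 ≤ 2 * ((df:ℝ) - 1) / df :=
      bloch_bound' (le_trans one_le_two hdf) lamf hfherm hftr hforth (σf l) (hσf l).1 (hσf l).2
    have hvbd : ∑ j, v l j ^ 2 ≤ 2 * ((dg:ℝ) - 1) / dg :=
      bloch_bound' (le_trans one_le_two hdg) lamg hgherm hgtr hgorth (σg l) (hσg l).1 (hσg l).2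
    have hwbd : ∑ k, w l k ^ 2 ≤ Ch :=
      bloch_bound' (le_trans one_le_two hdh) lamh hhherm hhtr hhorth (σh l) (hσh l).1 (hσh l).2
    have hw0 : 0 ≤ ∑ k, w l k ^ 2 := by positivity
    have hv0 : 0 ≤ ∑ j, v l j ^ 2 := by positivity
    have haaC : a l ⬝ᵥ a l ≤ Cf := by
      rw [haa, hCf]
      have : 1 + 2 * ((df:ℝ) - 1) / df = (3 * (df:ℝ) - 2) / df := by
        field_simp; ring
      linarith [hubd]
    have hbbC : b l ⬝ᵥ b l ≤ Ch * (Ch * Cg) := by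
      rw [hbb]
      have h1 : (∑ k, w l k ^ 2) + (∑ j, v l j ^ 2) * (∑ k, w l k ^ 2)
          = (∑ k, w l k ^ 2) * (1 + ∑ j, v l j ^ 2) := by ring
      rw [h1]
      have h2 : 1 + ∑ j, v l j ^ 2 ≤ Cg := by
        rw [hCg]
        have : 1 + 2 * ((dg:ℝ) - 1) / dg = (3 * (dg:ℝ) - 2) / dg := by
          field_simp; ring
        linarith [hvbd]
      calc (∑ k, w l k ^ 2) * (1 + ∑ j, v l j ^ 2) ≤ Ch * Cg := by
            apply mul_le_mul hwbd h2 (by positivity) hCh0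
        _ = 1 * (Ch * Cg) := by ring
        _ ≤ Ch * (Ch * Cg) := mul_le_mul_of_nonneg_right hCh1 (mul_nonneg hCh0 hCg0)
    have haa0 : 0 ≤ a l ⬝ᵥ a l := by rw [haa]; positivity
    have hbb0 : 0 ≤ b l ⬝ᵥ b l := by rw [hbb]; positivity
    calc Real.sqrt (a l ⬝ᵥ a l) * Real.sqrt (b l ⬝ᵥ b l)
        = Real.sqrt ((a l ⬝ᵥ a l) * (b l ⬝ᵥ b l)) := (Real.sqrt_mul haa0 _).symm
      _ ≤ Real.sqrt (Ch ^ 2 * (Cf * Cg)) := by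
          apply Real.sqrt_le_sqrt
          calc (a l ⬝ᵥ a l) * (b l ⬝ᵥ b l) ≤ Cf * (Ch * (Ch * Cg)) :=
                mul_le_mul haaC hbbC hbb0 hCf0
            _ = Ch ^ 2 * (Cf * Cg) := by ring
      _ = Ch * Real.sqrt (Cf * Cg) := by
          rw [Real.sqrt_mul (sq_nonneg Ch), Real.sqrt_sq hCh0]
  have hCfCg : Cf * Cg = (3 * (df:ℝ) - 2) * (3 * (dg:ℝ) - 2) / ((df:ℝ) * (dg:ℝ)) := by
    rw [hCf, hCg, div_mul_div_comm]
  calc ∑ l, p l * (Real.sqrt (a l ⬝ᵥ a l) * Real.sqrt (b l ⬝ᵥ b l))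
      ≤ ∑ l, p l * (Ch * Real.sqrt (Cf * Cg)) :=
        Finset.sum_le_sum (fun l _ => mul_le_mul_of_nonneg_left (hterm l) (hp l).le)
    _ = Ch * Real.sqrt (Cf * Cg) := by rw [← Finset.sum_mul, hpsum, one_mul]
    _ = (2 * ((dh : ℝ) - 1) / (dh : ℝ)) *
          Real.sqrt ((3 * (df : ℝ) - 2) * (3 * (dg : ℝ) - 2) / ((df : ℝ) * (dg : ℝ))) := by
        rw [hCfCg]
end

section
/- For an n-partite pure state ρ on (ℂ^d)^{⊗n} with n ≥ 3, the full n-body correlation tensor satisfies ‖T^{(1⋯n)}‖² ≤ (2/d)ⁿ · ((n−2)dⁿ − n d^{n−2} + 2)/(n−2). -/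
open Matrix BigOperators
open scoped ComplexOrder

namespace NPCB

variable {d : ℕ}

lemma lamext_complete (v : Option (Fin (d ^ 2 - 1)) → Matrix (Fin d) (Fin d) ℂ) (hd : 2 ≤ d)
    (hvorth : ∀ i j, (v i * v j).trace = if i = j then 2 else 0) :
    ∀ p q r s : Fin d, ∑ i : Option (Fin (d ^ 2 - 1)), v i p q * v i r s
      = if q = r ∧ p = s then 2 else 0 := by
  have hli : LinearIndependent ℂ v := by
    rw [Fintype.linearIndependent_iff]
    intro g hg j
    have h2 : ((∑ i, g i • v i) * v j).trace = 0 := by rw [hg]; simp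
    rw [Finset.sum_mul] at h2
    simp only [Matrix.smul_mul, Matrix.trace_sum, Matrix.trace_smul, hvorth, smul_eq_mul,
      mul_ite, mul_zero, Finset.sum_ite_eq', Finset.mem_univ, if_pos] at h2
    have : (2:ℂ) ≠ 0 := two_ne_zero
    exact (mul_eq_zero.mp h2).resolve_right this
  have hcard : Fintype.card (Option (Fin (d ^ 2 - 1)))
      = Module.finrank ℂ (Matrix (Fin d) (Fin d) ℂ) := by
    rw [Module.finrank_matrix]
    simp only [Fintype.card_option, Fintype.card_fin]
    have : 1 ≤ d ^ 2 := by nlinarith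
    rw [Nat.sub_add_cancel this, sq]
    simp [Module.finrank_self]
  have hspan : Submodule.span ℂ (Set.range v) = ⊤ :=
    hli.span_eq_top_of_card_eq_finrank hcard
  let f : Matrix (Fin d) (Fin d) ℂ →ₗ[ℂ] Matrix (Fin d) (Fin d) ℂ :=
  { toFun := fun M => ∑ i, ((v i * M).trace) • v i
    map_add' := by
      intro M N
      simp only [Matrix.mul_add, Matrix.trace_add, add_smul, Finset.sum_add_distrib]
    map_smul' := by
      intro c M
      simp only [Matrix.mul_smul, Matrix.trace_smul, smul_eq_mul, RingHom.id_apply,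
        Finset.smul_sum, smul_smul] }
  have hf : f = (2:ℂ) • LinearMap.id := by
    apply LinearMap.ext_on hspan
    rintro x ⟨j, rfl⟩
    show ∑ i, ((v i * v j).trace) • v i = _
    simp [hvorth, ite_smul]
  -- evaluate at standard basis matrices
  intro p q r s
  have htrE : ∀ i, (v i * Matrix.single q p (1:ℂ)).trace = v i p q := by
    intro i
    rw [Matrix.trace]
    rw [Finset.sum_eq_single p]
    · simp [Matrix.diag]
    · intro b _ hb
      simp [Matrix.diag, Matrix.mul_single_apply_of_ne, hb]
    · simp
  have h3 := LinearMap.congr_fun hf (Matrix.single q p (1:ℂ))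
  simp only [f, LinearMap.coe_mk, AddHom.coe_mk, LinearMap.smul_apply, LinearMap.id_apply] at h3
  have h4 : (∑ i, ((v i * Matrix.single q p (1:ℂ)).trace) • v i) r s
      = ((2:ℂ) • Matrix.single q p 1) r s := by rw [h3]
  simp only [Matrix.sum_apply, Matrix.smul_apply, htrE, smul_eq_mul] at h4
  rw [show (∑ i : Option (Fin (d ^ 2 - 1)), v i p q * v i r s)
    = ∑ i : Option (Fin (d ^ 2 - 1)), v i p q * v i r s from rfl]
  rw [h4]
  simp [Matrix.single, mul_ite]



variable {d : ℕ}

noncomputable def lamext (lam : Fin (d ^ 2 - 1) → Matrix (Fin d) (Fin d) ℂ) :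
    Option (Fin (d ^ 2 - 1)) → Matrix (Fin d) (Fin d) ℂ
  | none => (Real.sqrt (2 / d) : ℂ) • 1
  | some i => lam i

variable {n : ℕ}

noncomputable def Lam (lam : Fin (d ^ 2 - 1) → Matrix (Fin d) (Fin d) ℂ)
    (a : Fin n → Option (Fin (d ^ 2 - 1))) : Matrix (Fin n → Fin d) (Fin n → Fin d) ℂ :=
  Matrix.of fun x y => ∏ k, lamext lam (a k) (x k) (y k)

def dl (A : Finset (Fin n)) (x y z w : Fin n → Fin d) : ℂ :=
  ∏ k, if k ∈ A then (if y k = z k then 1 else 0) * (if x k = w k then (1:ℂ) else 0)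
       else (if x k = y k then 1 else 0) * (if z k = w k then 1 else 0)

def SS (n : ℕ) (dd : ℕ) (A : Finset (Fin n)) : Finset (Fin n → Option (Fin (dd ^ 2 - 1))) :=
  Finset.univ.filter (fun a => ∀ k, k ∉ A → a k = none)

lemma csq' (hd : 0 < d) : ((Real.sqrt (2 / d) : ℝ) : ℂ) * ((Real.sqrt (2 / d) : ℝ) : ℂ) = 2 / d := by
  have h : (0:ℝ) ≤ 2 / d := by positivity
  rw [← Complex.ofReal_mul, Real.mul_self_sqrt h]
  push_cast; ring

lemma ite_one_zero_comm {m : Type*} [DecidableEq m] (a b : m) :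
    (if a = b then (1:ℂ) else 0) = (if b = a then 1 else 0) := by
  by_cases h : a = b
  · simp [h]
  · rw [if_neg h, if_neg (fun hh => h hh.symm)]

lemma lamext_herm (lam : Fin (d ^ 2 - 1) → Matrix (Fin d) (Fin d) ℂ)
    (hherm : ∀ i, (lam i).IsHermitian) : ∀ i, (lamext lam i).IsHermitian := by
  rintro (_ | i)
  · show ((Real.sqrt (2 / d) : ℂ) • (1 : Matrix (Fin d) (Fin d) ℂ)).IsHermitian
    unfold Matrix.IsHermitian
    rw [Matrix.conjTranspose_smul]
    simp [Matrix.IsHermitian, Complex.conj_ofReal]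
  · exact hherm i

lemma lamext_orth (lam : Fin (d ^ 2 - 1) → Matrix (Fin d) (Fin d) ℂ) (hd : 0 < d)
    (htr : ∀ i, (lam i).trace = 0)
    (horth : ∀ i j, (lam i * lam j).trace = if i = j then 2 else 0) :
    ∀ i j, (lamext lam i * lamext lam j).trace = if i = j then 2 else 0 := by
  have hd' : (d : ℂ) ≠ 0 := by exact_mod_cast hd.ne'
  rintro (_ | i) (_ | j)
  · show ((((Real.sqrt (2 / d) : ℂ)) • (1:Matrix (Fin d) (Fin d) ℂ)) *
      (((Real.sqrt (2 / d) : ℂ)) • 1)).trace = _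
    simp only [Matrix.smul_mul, Matrix.mul_smul, Matrix.mul_one, Matrix.trace_smul,
      Matrix.trace_one, smul_eq_mul, if_pos rfl]
    rw [Fintype.card_fin, ← mul_assoc, csq' hd]
    field_simp
    simp
  · show ((((Real.sqrt (2 / d) : ℂ)) • (1:Matrix (Fin d) (Fin d) ℂ)) * lam j).trace = _
    simp [Matrix.smul_mul, Matrix.trace_smul, htr j]
  · show ((lam i) * (((Real.sqrt (2 / d) : ℂ)) • (1:Matrix (Fin d) (Fin d) ℂ))).trace = _
    simp [Matrix.mul_smul, Matrix.trace_smul, htr i]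
  · rw [show (lamext lam (some i) * lamext lam (some j)) = lam i * lam j from rfl, horth i j]
    simp [Option.some_inj]


/-- inner lemma: sum over supported tensors of products of two entries factorizes -/
lemma inner_sum (lam : Fin (d ^ 2 - 1) → Matrix (Fin d) (Fin d) ℂ) (hd : 2 ≤ d)
    (hcomp : ∀ p q r s : Fin d, ∑ i : Option (Fin (d ^ 2 - 1)),
      lamext lam i p q * lamext lam i r s = if q = r ∧ p = s then 2 else 0)
    (A : Finset (Fin n)) (x y z w : Fin n → Fin d) :
    ∑ a ∈ SS n d A, Lam lam a y x * Lam lam a w z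
      = 2 ^ A.card * ((2:ℂ) / d) ^ (n - A.card) * dl A x y z w := by
  have hd0 : 0 < d := by omega
  -- indicator form
  rw [SS, Finset.sum_filter]
  set G : Fin n → Option (Fin (d ^ 2 - 1)) → ℂ := fun k i =>
    if k ∈ A then lamext lam i (y k) (x k) * lamext lam i (w k) (z k)
    else if i = none then lamext lam i (y k) (x k) * lamext lam i (w k) (z k) else 0 with hG
  have hGdef : ∀ k i, G k i =
      if k ∈ A then lamext lam i (y k) (x k) * lamext lam i (w k) (z k)
      else if i = none then lamext lam i (y k) (x k) * lamext lam i (w k) (z k) else 0 :=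
    fun k i => rfl
  have step1 : ∀ a : Fin n → Option (Fin (d ^ 2 - 1)),
      (if (∀ k, k ∉ A → a k = none) then Lam lam a y x * Lam lam a w z else 0)
      = ∏ k, G k (a k) := by
    intro a
    by_cases h : ∀ k, k ∉ A → a k = none
    · rw [if_pos h, Lam]
      simp only [Matrix.of_apply]
      rw [← Finset.prod_mul_distrib]
      refine Finset.prod_congr rfl fun k _ => ?_
      rw [hGdef]
      by_cases hk : k ∈ A
      · rw [if_pos hk]
      · rw [if_neg hk, if_pos (h k hk)]
    · rw [if_neg h]
      push_neg at h
      obtain ⟨k0, hk0, hk0'⟩ := h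
      symm
      refine Finset.prod_eq_zero (Finset.mem_univ k0) ?_
      rw [hGdef, if_neg hk0, if_neg hk0']
  rw [Finset.sum_congr rfl fun a _ => step1 a, ← Fintype.prod_sum]
  -- evaluate single-site sums
  have site : ∀ k : Fin n, (∑ i : Option (Fin (d ^ 2 - 1)), G k i)
      = (if k ∈ A then (2:ℂ) else 2 / d) *
        (if k ∈ A then (if y k = z k then 1 else 0) * (if x k = w k then (1:ℂ) else 0)
         else (if x k = y k then 1 else 0) * (if z k = w k then 1 else 0)) := by
    intro k
    simp only [hGdef]
    by_cases hk : k ∈ A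
    · simp only [if_pos hk]
      rw [hcomp (y k) (x k) (w k) (z k)]
      by_cases h1 : x k = w k <;> by_cases h2 : y k = z k <;>
        simp [h1, h2]
    · simp only [if_neg hk]
      rw [Finset.sum_ite_eq' Finset.univ none
        (fun i => lamext lam i (y k) (x k) * lamext lam i (w k) (z k))]
      simp only [Finset.mem_univ, if_pos]
      show ((Real.sqrt (2 / d) : ℂ) • (1:Matrix (Fin d) (Fin d) ℂ)) (y k) (x k) *
        (((Real.sqrt (2 / d) : ℂ)) • (1:Matrix (Fin d) (Fin d) ℂ)) (w k) (z k) = _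
      simp only [Matrix.smul_apply, Matrix.one_apply, smul_eq_mul]
      rw [ite_one_zero_comm (y k) (x k), ite_one_zero_comm (w k) (z k),
        mul_mul_mul_comm, csq' hd0]
  rw [Finset.prod_congr rfl fun k _ => site k, Finset.prod_mul_distrib]
  congr 1
  · rw [← Finset.prod_mul_prod_compl A]
    rw [Finset.prod_congr rfl (fun k hk => if_pos hk),
      Finset.prod_congr rfl (fun k (hk : k ∈ Aᶜ) => if_neg (Finset.mem_compl.mp hk))]
    rw [Finset.prod_const, Finset.prod_const, Finset.card_compl, Fintype.card_fin]

noncomputable def tval (lam : Fin (d ^ 2 - 1) → Matrix (Fin d) (Fin d) ℂ)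
    (ρ : Matrix (Fin n → Fin d) (Fin n → Fin d) ℂ) (a : Fin n → Option (Fin (d ^ 2 - 1))) : ℂ :=
  (ρ * Lam lam a).trace

noncomputable def Dfun (ρ : Matrix (Fin n → Fin d) (Fin n → Fin d) ℂ) (A : Finset (Fin n)) : ℂ :=
  ∑ x, ∑ z, ∑ y, ∑ w, dl A x y z w * (ρ x y * ρ z w)

lemma prodDelta {m : ℕ} (y z : Fin m → Fin d) :
    ∏ k, (if y k = z k then (1:ℂ) else 0) = if y = z then 1 else 0 := by
  by_cases h : y = z
  · simp [h]
  · rw [if_neg h]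
    obtain ⟨k, hk⟩ := Function.ne_iff.mp h
    exact Finset.prod_eq_zero (Finset.mem_univ k) (if_neg hk)

lemma master (lam : Fin (d ^ 2 - 1) → Matrix (Fin d) (Fin d) ℂ) (hd : 2 ≤ d)
    (hcomp : ∀ p q r s : Fin d, ∑ i : Option (Fin (d ^ 2 - 1)),
      lamext lam i p q * lamext lam i r s = if q = r ∧ p = s then 2 else 0)
    (ρ : Matrix (Fin n → Fin d) (Fin n → Fin d) ℂ) (A : Finset (Fin n)) :
    ∑ a ∈ SS n d A, tval lam ρ a * tval lam ρ a
      = 2 ^ A.card * ((2:ℂ) / d) ^ (n - A.card) * Dfun ρ A := by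
  have ht : ∀ a, tval lam ρ a = ∑ x, ∑ y, ρ x y * Lam lam a y x := by
    intro a
    simp [tval, Matrix.trace, Matrix.diag, Matrix.mul_apply]
  have step1 : ∑ a ∈ SS n d A, tval lam ρ a * tval lam ρ a
      = ∑ a ∈ SS n d A, ∑ x, ∑ z, ∑ y, ∑ w,
          (ρ x y * ρ z w) * (Lam lam a y x * Lam lam a w z) := by
    refine Finset.sum_congr rfl fun a _ => ?_
    rw [ht, Finset.sum_mul_sum]
    refine Finset.sum_congr rfl fun x _ => ?_
    refine Finset.sum_congr rfl fun z _ => ?_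
    rw [Finset.sum_mul_sum]
    refine Finset.sum_congr rfl fun y _ => ?_
    refine Finset.sum_congr rfl fun w _ => ?_
    rw [mul_mul_mul_comm]
  rw [step1, Finset.sum_comm]
  rw [Dfun, Finset.mul_sum]
  refine Finset.sum_congr rfl fun x _ => ?_
  rw [Finset.sum_comm, Finset.mul_sum]
  refine Finset.sum_congr rfl fun z _ => ?_
  rw [Finset.sum_comm, Finset.mul_sum]
  refine Finset.sum_congr rfl fun y _ => ?_
  rw [Finset.sum_comm, Finset.mul_sum]
  refine Finset.sum_congr rfl fun w _ => ?_
  rw [← Finset.mul_sum, inner_sum lam hd hcomp A x y z w]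
  all_goals ring

lemma dl_compl (A : Finset (Fin n)) (x y z w : Fin n → Fin d) :
    dl Aᶜ x y z w = dl A x w z y := by
  refine Finset.prod_congr rfl fun k _ => ?_
  by_cases hk : k ∈ A
  · rw [if_neg (by simp [hk]), if_pos hk, ite_one_zero_comm (w k) (z k)]
    ring
  · rw [if_pos (by simp [hk]), if_neg hk, ite_one_zero_comm (z k) (y k)]
    ring

lemma Dfun_compl (ρ : Matrix (Fin n → Fin d) (Fin n → Fin d) ℂ)
    (hmin : ∀ x y z w, ρ x y * ρ z w = ρ x w * ρ z y) (A : Finset (Fin n)) :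
    Dfun ρ Aᶜ = Dfun ρ A := by
  rw [Dfun, Dfun]
  refine Finset.sum_congr rfl fun x _ => ?_
  refine Finset.sum_congr rfl fun z _ => ?_
  have h1 : ∀ y w : Fin n → Fin d, dl Aᶜ x y z w * (ρ x y * ρ z w)
      = dl A x w z y * (ρ x y * ρ z w) := fun y w => by rw [dl_compl]
  simp only [h1]
  rw [Finset.sum_comm]
  refine Finset.sum_congr rfl fun y _ => ?_
  refine Finset.sum_congr rfl fun w _ => ?_
  rw [hmin x w z y]

lemma Dfun_univ (ρ : Matrix (Fin n → Fin d) (Fin n → Fin d) ℂ) :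
    Dfun ρ Finset.univ = (ρ * ρ).trace := by
  have htr : (ρ * ρ).trace = ∑ x, ∑ z, ρ x z * ρ z x := by
    simp [Matrix.trace, Matrix.diag, Matrix.mul_apply]
  rw [htr, Dfun]
  refine Finset.sum_congr rfl fun x _ => ?_
  refine Finset.sum_congr rfl fun z _ => ?_
  have hdl : ∀ y w : Fin n → Fin d, dl Finset.univ x y z w
      = (if y = z then (1:ℂ) else 0) * (if x = w then 1 else 0) := by
    intro y w
    rw [dl]
    rw [Finset.prod_congr rfl fun k _ => if_pos (Finset.mem_univ k), Finset.prod_mul_distrib,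
      prodDelta, prodDelta]
  simp only [hdl, ite_mul, one_mul, zero_mul]
  simp [Finset.sum_ite_eq, Finset.sum_ite_eq']


lemma pure_minor {N : Type*} [Fintype N] [DecidableEq N] (ρ : Matrix N N ℂ)
    (hρ : ρ.PosSemidef) (hρtr : ρ.trace = 1) (hpure : ρ * ρ = ρ) :
    ∀ x y z w, ρ x y * ρ z w = ρ x w * ρ z y := by
  have hH : ρ.IsHermitian := hρ.1
  set U : Matrix N N ℂ := (hH.eigenvectorUnitary : Matrix N N ℂ) with hU
  set ev : N → ℝ := hH.eigenvalues with hev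
  set E : Matrix N N ℂ := Matrix.diagonal (fun i => (ev i : ℂ)) with hE
  have hspec : ρ = U * E * star U := by
    have h := hH.spectral_theorem
    exact h
  have key : star U * U = 1 := Matrix.mem_unitaryGroup_iff'.mp hH.eigenvectorUnitary.2
  have key2 : U * star U = 1 := Matrix.mem_unitaryGroup_iff.mp hH.eigenvectorUnitary.2
  have hE' : star U * ρ * U = E := by
    rw [hspec]
    simp only [← Matrix.mul_assoc]
    rw [key, Matrix.one_mul, Matrix.mul_assoc, key, Matrix.mul_one]
  have hEE : E * E = E := by
    rw [← hE']
    simp only [← Matrix.mul_assoc]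
    rw [Matrix.mul_assoc (star U * ρ) U (star U), key2, Matrix.mul_one,
      Matrix.mul_assoc (star U) ρ ρ, hpure]
  have hev01 : ∀ i, ev i = 0 ∨ ev i = 1 := by
    intro i
    have h4 : ((ev i : ℂ)) * (ev i : ℂ) = (ev i : ℂ) := by
      have h := congrArg (fun M => M i i) hEE
      simpa [hE, Matrix.diagonal_mul_diagonal, Matrix.diagonal_apply_eq] using h
    have h5 : ev i * ev i = ev i := by exact_mod_cast h4
    have h6 : ev i * (ev i - 1) = 0 := by linear_combination h5
    rcases mul_eq_zero.mp h6 with h | h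
    · exact Or.inl h
    · exact Or.inr (by linarith)
  have hsum : ∑ i, ev i = 1 := by
    have h7 : ρ.trace = E.trace := by
      rw [hspec, Matrix.trace_mul_comm, ← Matrix.mul_assoc, key, Matrix.one_mul]
    rw [hρtr, hE, Matrix.trace_diagonal] at h7
    exact_mod_cast h7.symm
  set s : Finset N := Finset.univ.filter (fun i => ev i = 1) with hs
  have hcard : s.card = 1 := by
    have h8 : ∑ i, ev i = ∑ i ∈ s, ev i + ∑ i ∈ Finset.univ.filter (fun i => ¬ ev i = 1), ev i :=
      (Finset.sum_filter_add_sum_filter_not _ _ _).symm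
    have h9 : ∑ i ∈ s, ev i = s.card := by
      rw [Finset.sum_congr rfl (fun i hi => (Finset.mem_filter.mp hi).2)]
      simp [hs]
    have h10 : ∑ i ∈ Finset.univ.filter (fun i => ¬ ev i = 1), ev i = 0 := by
      refine Finset.sum_eq_zero fun i hi => ?_
      rcases hev01 i with h | h
      · exact h
      · exact absurd h (Finset.mem_filter.mp hi).2
    have h11 : (s.card : ℝ) = 1 := by
      have h12 := hsum
      rw [h8, h9, h10, add_zero] at h12
      exact h12
    exact_mod_cast h11
  obtain ⟨i0, hi0⟩ := Finset.card_eq_one.mp hcard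
  have hev_i0 : ev i0 = 1 := by
    have h13 : i0 ∈ s := hi0 ▸ Finset.mem_singleton_self i0
    exact (Finset.mem_filter.mp h13).2
  have hev_ne : ∀ i, i ≠ i0 → ev i = 0 := by
    intro i hi
    rcases hev01 i with h | h
    · exact h
    · exfalso
      have h14 : i ∈ s := Finset.mem_filter.mpr ⟨Finset.mem_univ i, h⟩
      rw [hi0] at h14
      exact hi (Finset.mem_singleton.mp h14)
  have hρ_entry : ∀ x y, ρ x y = U x i0 * star (U y i0) := by
    intro x y
    rw [hspec, Matrix.mul_apply]
    rw [Finset.sum_eq_single i0]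
    · rw [Matrix.mul_diagonal, hev_i0]
      simp [Matrix.star_apply]
    · intro i _ hi
      rw [Matrix.mul_diagonal, hev_ne i hi]
      simp
    · simp
  intro x y z w
  rw [hρ_entry, hρ_entry, hρ_entry, hρ_entry]
  ring


lemma Lam_herm {d n : ℕ} (lam : Fin (d ^ 2 - 1) → Matrix (Fin d) (Fin d) ℂ)
    (hherm : ∀ i, (lam i).IsHermitian) (a : Fin n → Option (Fin (d ^ 2 - 1))) :
    (Lam lam a).IsHermitian := by
  have hl := lamext_herm lam hherm
  unfold Matrix.IsHermitian
  ext x y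
  rw [Matrix.conjTranspose_apply, Lam, Matrix.of_apply, Matrix.of_apply, star_prod]
  exact Finset.prod_congr rfl fun k _ => (hl (a k)).apply (x k) (y k)

lemma tval_real {d n : ℕ} (lam : Fin (d ^ 2 - 1) → Matrix (Fin d) (Fin d) ℂ)
    (hherm : ∀ i, (lam i).IsHermitian) (ρ : Matrix (Fin n → Fin d) (Fin n → Fin d) ℂ)
    (hρH : ρ.IsHermitian) (a : Fin n → Option (Fin (d ^ 2 - 1))) :
    tval lam ρ a = (((tval lam ρ a).re : ℝ) : ℂ) := by
  have h : (starRingEnd ℂ) (tval lam ρ a) = tval lam ρ a := by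
    show star (tval lam ρ a) = tval lam ρ a
    rw [tval, ← Matrix.trace_conjTranspose, Matrix.conjTranspose_mul,
      (Lam_herm lam hherm a), hρH, Matrix.trace_mul_comm]
  exact (Complex.conj_eq_iff_re.mp h).symm

lemma tval_allnone {d n : ℕ} (lam : Fin (d ^ 2 - 1) → Matrix (Fin d) (Fin d) ℂ)
    (ρ : Matrix (Fin n → Fin d) (Fin n → Fin d) ℂ) (hρtr : ρ.trace = 1) :
    tval lam ρ (fun _ => none) = ((Real.sqrt (2 / d) : ℝ) : ℂ) ^ n := by
  have hL : Lam lam (fun _ : Fin n => none)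
      = ((Real.sqrt (2 / d) : ℝ) : ℂ) ^ n • (1 : Matrix (Fin n → Fin d) (Fin n → Fin d) ℂ) := by
    ext x y
    rw [Lam, Matrix.of_apply]
    show ∏ k, (((Real.sqrt (2 / d) : ℝ) : ℂ) • (1 : Matrix (Fin d) (Fin d) ℂ)) (x k) (y k) = _
    simp only [Matrix.smul_apply, Matrix.one_apply, smul_eq_mul]
    rw [Finset.prod_mul_distrib, Finset.prod_const, prodDelta]
    simp [Finset.card_univ, Matrix.one_apply]
  rw [tval, hL, Matrix.mul_smul, Matrix.mul_one, Matrix.trace_smul, hρtr]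
  simp

lemma real_sq {z : ℂ} (h : z = ((z.re : ℝ) : ℂ)) : z * z = (((z.re ^ 2 : ℝ)) : ℂ) := by
  obtain ⟨r, hr⟩ : ∃ r : ℝ, z = (r : ℂ) := ⟨z.re, h⟩
  rw [hr]
  simp [Complex.ofReal_re]
  push_cast
  ring

def cnt1 {n : ℕ} {ι : Type*} [DecidableEq ι] (a : Fin n → Option ι) : ℕ :=
  (Finset.univ.filter (fun j => a j = none)).card

def cnt2 {n : ℕ} {ι : Type*} [DecidableEq ι] (a : Fin n → Option ι) : ℕ :=
  (Finset.univ.filter (fun j => ∀ k, k ≠ j → a k = none)).card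

lemma count_swap {α β : Type*} [Fintype α] [Fintype β] (P : β → α → Prop)
    [∀ j a, Decidable (P j a)] (s : α → ℝ) :
    ∑ j : β, ∑ a ∈ Finset.univ.filter (P j), s a
      = ∑ a : α, ((Finset.univ.filter (fun j => P j a)).card : ℝ) * s a := by
  simp only [Finset.sum_filter]
  rw [Finset.sum_comm]
  refine Finset.sum_congr rfl fun a _ => ?_
  rw [Finset.sum_ite, Finset.sum_const, Finset.sum_const_zero, add_zero, nsmul_eq_mul]

end NPCB


set_option maxHeartbeats 1000000

/-- for an n-partite pure state on (ℂ^d)^{⊗n} with n ≥ 3,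
‖T^{(1⋯n)}‖² ≤ (2/d)ⁿ·((n−2)dⁿ − n d^{n−2} + 2)/(n−2). -/
theorem npartite_pure_correlation_bound
    (n d : ℕ) (hn : 3 ≤ n) (hd : 2 ≤ d)
    (lam : Fin (d ^ 2 - 1) → Matrix (Fin d) (Fin d) ℂ)
    (hherm : ∀ i, (lam i).IsHermitian) (htr : ∀ i, (lam i).trace = 0)
    (horth : ∀ i j, (lam i * lam j).trace = if i = j then 2 else 0)
    (ρ : Matrix (Fin n → Fin d) (Fin n → Fin d) ℂ)
    (hρ : ρ.PosSemidef) (hρtr : ρ.trace = 1) (hpure : ρ * ρ = ρ) :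
    ∑ i : Fin n → Fin (d ^ 2 - 1),
        (Complex.re ((ρ * Matrix.of fun (x y : Fin n → Fin d) => ∏ k, lam (i k) (x k) (y k)).trace)) ^ 2
      ≤ (2 / (d : ℝ)) ^ n *
          (((n : ℝ) - 2) * (d : ℝ) ^ n - (n : ℝ) * (d : ℝ) ^ (n - 2) + 2) / ((n : ℝ) - 2) := by
  obtain ⟨m, rfl⟩ : ∃ m, n = m + 3 := ⟨n - 3, by omega⟩
  have hd0 : 0 < d := by omega
  have hd4 : 4 ≤ d ^ 2 := by nlinarith
  have hdC : (d : ℂ) ≠ 0 := by exact_mod_cast hd0.ne'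
  have hdR : (d : ℝ) ≠ 0 := by exact_mod_cast hd0.ne'
  have hcomp := NPCB.lamext_complete (NPCB.lamext lam) hd (NPCB.lamext_orth lam hd0 htr horth)
  have hmin := NPCB.pure_minor ρ hρ hρtr hpure
  have hρH : ρ.IsHermitian := hρ.1
  set sA : (Fin (m + 3) → Option (Fin (d ^ 2 - 1))) → ℝ :=
    fun a => ((NPCB.tval lam ρ a).re) ^ 2 with hsA
  have hs0 : ∀ a, 0 ≤ sA a := fun a => sq_nonneg _
  have hsq : ∀ a, NPCB.tval lam ρ a * NPCB.tval lam ρ a = ((sA a : ℝ) : ℂ) :=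
    fun a => NPCB.real_sq (NPCB.tval_real lam hherm ρ hρH a)
  -- (F1): total sum
  have hF1 : ∑ a : Fin (m + 3) → Option (Fin (d ^ 2 - 1)), sA a = 2 ^ (m + 3) := by
    have h := NPCB.master lam hd hcomp ρ (Finset.univ)
    rw [NPCB.Dfun_univ, hpure, hρtr] at h
    have hSS : NPCB.SS (m + 3) d Finset.univ = Finset.univ := by
      rw [NPCB.SS]
      simp
    rw [hSS, Finset.card_univ, Fintype.card_fin, Nat.sub_self, pow_zero, mul_one, mul_one] at h
    rw [Finset.sum_congr rfl (fun a _ => hsq a), ← Complex.ofReal_sum] at h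
    exact_mod_cast h
  -- (F2): per-site purity relation
  have hF2 : ∀ j : Fin (m + 3),
      ∑ a ∈ Finset.univ.filter (fun a => a j = none), sA a
        = (d : ℝ) ^ (m + 1) *
          ∑ a ∈ Finset.univ.filter (fun a => ∀ k, k ≠ j → a k = none), sA a := by
    intro j
    have h1 := NPCB.master lam hd hcomp ρ ({j}ᶜ)
    have h2 := NPCB.master lam hd hcomp ρ ({j})
    rw [NPCB.Dfun_compl ρ hmin {j}] at h1
    have hc1 : ({j}ᶜ : Finset (Fin (m + 3))).card = m + 2 := by
      rw [Finset.card_compl, Finset.card_singleton, Fintype.card_fin]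
      omega
    have hS1 : NPCB.SS (m + 3) d ({j}ᶜ) = Finset.univ.filter (fun a => a j = none) := by
      rw [NPCB.SS]
      apply Finset.filter_congr
      intro a _
      simp
    have hS2 : NPCB.SS (m + 3) d ({j}) =
        Finset.univ.filter (fun a => ∀ k, k ≠ j → a k = none) := by
      rw [NPCB.SS]
      apply Finset.filter_congr
      intro a _
      simp [Finset.mem_singleton]
    rw [hS1, hc1, (show m + 3 - (m + 2) = 1 by omega)] at h1
    rw [hS2, Finset.card_singleton, (show m + 3 - 1 = m + 2 by omega)] at h2
    rw [Finset.sum_congr rfl (fun a _ => hsq a), ← Complex.ofReal_sum] at h1 h2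
    have hcoef : (2 : ℂ) ^ (m + 2) * ((2 : ℂ) / d) ^ 1
        = (d : ℂ) ^ (m + 1) * ((2 : ℂ) ^ 1 * ((2 : ℂ) / d) ^ (m + 2)) := by
      rw [div_pow, div_pow]
      field_simp
      ring
    have hC : ((∑ a ∈ Finset.univ.filter (fun a => a j = none), sA a : ℝ) : ℂ)
        = (d : ℂ) ^ (m + 1) *
            ((∑ a ∈ Finset.univ.filter (fun a => ∀ k, k ≠ j → a k = none), sA a : ℝ) : ℂ) := by
      rw [h1, h2, hcoef]
      ring
    exact_mod_cast hC
  -- counting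
  have hcs1 : ∑ j : Fin (m + 3), ∑ a ∈ Finset.univ.filter (fun a => a j = none), sA a
      = ∑ a, (NPCB.cnt1 a : ℝ) * sA a := by
    unfold NPCB.cnt1
    apply NPCB.count_swap
  have hcs2 : ∑ j : Fin (m + 3),
      ∑ a ∈ Finset.univ.filter (fun a => ∀ k, k ≠ j → a k = none), sA a
      = ∑ a, (NPCB.cnt2 a : ℝ) * sA a := by
    unfold NPCB.cnt2
    apply NPCB.count_swap
  have hF2' : ∑ a, (NPCB.cnt1 a : ℝ) * sA a
      = (d : ℝ) ^ (m + 1) * ∑ a, (NPCB.cnt2 a : ℝ) * sA a := by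
    rw [← hcs1, ← hcs2, Finset.mul_sum]
    exact Finset.sum_congr rfl fun j _ => hF2 j
  -- the weight function g
  have hG1 : ∑ a, (((m : ℝ) + 1) - (NPCB.cnt1 a : ℝ)
        + (d : ℝ) ^ (m + 1) * (NPCB.cnt2 a : ℝ)) * sA a = ((m : ℝ) + 1) * 2 ^ (m + 3) := by
    have hterm : ∀ a : Fin (m + 3) → Option (Fin (d ^ 2 - 1)),
        (((m : ℝ) + 1) - (NPCB.cnt1 a : ℝ) + (d : ℝ) ^ (m + 1) * (NPCB.cnt2 a : ℝ)) * sA a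
        = ((m : ℝ) + 1) * sA a - (NPCB.cnt1 a : ℝ) * sA a
          + (d : ℝ) ^ (m + 1) * ((NPCB.cnt2 a : ℝ) * sA a) := fun a => by ring
    rw [Finset.sum_congr rfl fun a _ => hterm a, Finset.sum_add_distrib,
      Finset.sum_sub_distrib, ← Finset.mul_sum, ← Finset.mul_sum, hF1]
    linarith [hF2']
  have hG2 : ∀ a : Fin (m + 3) → Option (Fin (d ^ 2 - 1)),
      0 ≤ ((m : ℝ) + 1) - (NPCB.cnt1 a : ℝ) + (d : ℝ) ^ (m + 1) * (NPCB.cnt2 a : ℝ) := by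
    intro a
    have hc1le : NPCB.cnt1 a ≤ m + 3 := by
      unfold NPCB.cnt1
      simpa using Finset.card_filter_le Finset.univ (fun j => a j = none)
    by_cases h : NPCB.cnt1 a ≤ m + 1
    · have h1 : (0 : ℝ) ≤ (d : ℝ) ^ (m + 1) * (NPCB.cnt2 a : ℝ) := by positivity
      have h2 : ((NPCB.cnt1 a : ℕ) : ℝ) ≤ (m : ℝ) + 1 := by exact_mod_cast h
      linarith
    · push_neg at h
      have hcompl : (Finset.univ.filter (fun j => ¬ a j = none)).card ≤ 1 := by
        have hh := Finset.card_filter_add_card_filter_not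
          (s := Finset.univ) (p := fun j : Fin (m + 3) => a j = none)
        simp only [Finset.card_univ, Fintype.card_fin] at hh
        have hc1v : NPCB.cnt1 a = (Finset.univ.filter (fun j => a j = none)).card := rfl
        omega
      obtain ⟨j, hj⟩ : ∃ j : Fin (m + 3), ∀ k, k ≠ j → a k = none := by
        by_cases hne : (Finset.univ.filter (fun j => ¬ a j = none)).Nonempty
        · obtain ⟨j0, hj0⟩ := hne
          refine ⟨j0, fun k hk => ?_⟩
          by_contra hkn
          have hk1 : k ∈ Finset.univ.filter (fun j => ¬ a j = none) :=
            Finset.mem_filter.mpr ⟨Finset.mem_univ k, hkn⟩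
          exact hk (Finset.card_le_one.mp hcompl k hk1 j0 hj0)
        · refine ⟨⟨0, by omega⟩, fun k _ => ?_⟩
          by_contra hkn
          exact hne ⟨k, Finset.mem_filter.mpr ⟨Finset.mem_univ k, hkn⟩⟩
      have hc2 : 1 ≤ NPCB.cnt2 a :=
        Finset.card_pos.mpr ⟨j, Finset.mem_filter.mpr ⟨Finset.mem_univ j, hj⟩⟩
      have h2d : (2 : ℝ) ≤ (d : ℝ) ^ (m + 1) := by
        calc (2 : ℝ) = 2 ^ 1 := by norm_num
          _ ≤ 2 ^ (m + 1) := by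
              apply pow_le_pow_right₀ (by norm_num) (by omega)
          _ ≤ (d : ℝ) ^ (m + 1) := by
              apply pow_le_pow_left₀ (by norm_num) (by exact_mod_cast hd)
      have hc2' : (1 : ℝ) ≤ (NPCB.cnt2 a : ℝ) := by exact_mod_cast hc2
      have hc1' : ((NPCB.cnt1 a : ℕ) : ℝ) ≤ (m : ℝ) + 3 := by exact_mod_cast hc1le
      have hDc : (2 : ℝ) * 1 ≤ (d : ℝ) ^ (m + 1) * (NPCB.cnt2 a : ℝ) :=
        mul_le_mul h2d hc2' zero_le_one (by linarith)
      linarith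
  -- split off the all-some part and the all-none point
  set F : Finset (Fin (m + 3) → Option (Fin (d ^ 2 - 1))) :=
    Finset.univ.filter (fun a => ∀ k, a k ≠ none) with hFdef
  set a0 : Fin (m + 3) → Option (Fin (d ^ 2 - 1)) := fun _ => none with ha0def
  have ha0F : a0 ∉ F := by
    rw [hFdef]
    simp only [Finset.mem_filter, Finset.mem_univ, true_and]
    intro h
    exact h ⟨0, by omega⟩ rfl
  have hgs_nonneg : ∀ a : Fin (m + 3) → Option (Fin (d ^ 2 - 1)),
      0 ≤ (((m : ℝ) + 1) - (NPCB.cnt1 a : ℝ) + (d : ℝ) ^ (m + 1) * (NPCB.cnt2 a : ℝ)) * sA a :=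
    fun a => mul_nonneg (hG2 a) (hs0 a)
  have hle : ∑ a ∈ F, (((m : ℝ) + 1) - (NPCB.cnt1 a : ℝ)
        + (d : ℝ) ^ (m + 1) * (NPCB.cnt2 a : ℝ)) * sA a
      + (((m : ℝ) + 1) - (NPCB.cnt1 a0 : ℝ)
        + (d : ℝ) ^ (m + 1) * (NPCB.cnt2 a0 : ℝ)) * sA a0
      ≤ ((m : ℝ) + 1) * 2 ^ (m + 3) := by
    rw [← hG1]
    have hdisj : Disjoint F {a0} := Finset.disjoint_singleton_right.mpr ha0F
    calc _ = ∑ a ∈ F ∪ {a0}, (((m : ℝ) + 1) - (NPCB.cnt1 a : ℝ)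
          + (d : ℝ) ^ (m + 1) * (NPCB.cnt2 a : ℝ)) * sA a := by
          rw [Finset.sum_union hdisj, Finset.sum_singleton]
      _ ≤ _ := Finset.sum_le_sum_of_subset_of_nonneg (Finset.subset_univ _)
          (fun a _ _ => hgs_nonneg a)
  -- evaluate the weights on F and at a0
  have hcnt1_F : ∀ a ∈ F, NPCB.cnt1 a = 0 := by
    intro a ha
    rw [hFdef, Finset.mem_filter] at ha
    unfold NPCB.cnt1
    rw [Finset.card_eq_zero, Finset.filter_eq_empty_iff]
    exact fun {j} _ => ha.2 j
  have hcnt2_F : ∀ a ∈ F, NPCB.cnt2 a = 0 := by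
    intro a ha
    rw [hFdef, Finset.mem_filter] at ha
    unfold NPCB.cnt2
    rw [Finset.card_eq_zero, Finset.filter_eq_empty_iff]
    intro j _ hcon
    set k : Fin (m + 3) := if j = ⟨0, by omega⟩ then ⟨1, by omega⟩ else ⟨0, by omega⟩ with hkdef
    have hkj : k ≠ j := by
      rw [hkdef]
      split_ifs with hsplit
      · rw [hsplit]
        simp [Fin.ext_iff]
      · exact fun hc => hsplit hc.symm
    exact ha.2 k (hcon k hkj)
  have hcnt1_a0 : NPCB.cnt1 a0 = m + 3 := by
    unfold NPCB.cnt1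
    rw [ha0def]
    rw [Finset.filter_true_of_mem (fun j _ => rfl), Finset.card_univ, Fintype.card_fin]
  have hcnt2_a0 : NPCB.cnt2 a0 = m + 3 := by
    unfold NPCB.cnt2
    rw [ha0def]
    rw [Finset.filter_true_of_mem (fun j _ => fun k _ => rfl), Finset.card_univ, Fintype.card_fin]
  have hsumF : ∑ a ∈ F, (((m : ℝ) + 1) - (NPCB.cnt1 a : ℝ)
        + (d : ℝ) ^ (m + 1) * (NPCB.cnt2 a : ℝ)) * sA a
      = ((m : ℝ) + 1) * ∑ a ∈ F, sA a := by
    rw [Finset.mul_sum]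
    refine Finset.sum_congr rfl fun a ha => ?_
    rw [hcnt1_F a ha, hcnt2_F a ha]
    push_cast
    ring
  -- value at a0
  have hs_a0 : sA a0 = (2 / (d : ℝ)) ^ (m + 3) := by
    have h1 : (NPCB.tval lam ρ a0).re = (Real.sqrt (2 / (d : ℝ))) ^ (m + 3) := by
      rw [ha0def, NPCB.tval_allnone lam ρ hρtr, ← Complex.ofReal_pow]
      exact Complex.ofReal_re _
    rw [hsA]
    simp only []
    rw [h1, ← pow_mul, mul_comm (m + 3) 2, pow_mul, Real.sq_sqrt (by positivity)]
  -- the goal sum equals the sum over F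
  have hbij : ∑ a ∈ F, sA a = ∑ i : Fin (m + 3) → Fin (d ^ 2 - 1),
      (Complex.re ((ρ * Matrix.of fun (x y : Fin (m + 3) → Fin d) =>
        ∏ k, lam (i k) (x k) (y k)).trace)) ^ 2 := by
    have hpos : 0 < d ^ 2 - 1 := by omega
    refine Finset.sum_nbij' (fun a => fun k => (a k).getD ⟨0, hpos⟩)
      (fun b => fun k => some (b k)) ?_ ?_ ?_ ?_ ?_
    · intro a _
      exact Finset.mem_univ _
    · intro b _
      rw [hFdef]
      refine Finset.mem_filter.mpr ⟨Finset.mem_univ _, fun k => by simp⟩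
    · intro a ha
      rw [hFdef, Finset.mem_filter] at ha
      funext k
      rcases hk : a k with _ | v
      · exact absurd hk (ha.2 k)
      · simp [hk]
    · intro b _
      funext k
      simp
    · intro a ha
      rw [hFdef, Finset.mem_filter] at ha
      have hval : NPCB.tval lam ρ a
          = (ρ * Matrix.of fun (x y : Fin (m + 3) → Fin d) =>
              ∏ k, lam (((a k).getD ⟨0, hpos⟩)) (x k) (y k)).trace := by
        rw [NPCB.tval, NPCB.Lam]
        congr 1
        congr 1
        funext x y
        simp only [Matrix.of_apply]
        refine Finset.prod_congr rfl fun k _ => ?_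
        rcases hk : a k with _ | v
        · exact absurd hk (ha.2 k)
        · simp [hk, NPCB.lamext]
      rw [hsA]
      simp only []
      rw [hval]
  -- final arithmetic
  rw [← hbij]
  have hfinal : ((m : ℝ) + 1) * ∑ a ∈ F, sA a
      + (((m : ℝ) + 3) * (d : ℝ) ^ (m + 1) - 2) * (2 / (d : ℝ)) ^ (m + 3)
      ≤ ((m : ℝ) + 1) * 2 ^ (m + 3) := by
    have h2 : (((m : ℝ) + 1) - (NPCB.cnt1 a0 : ℝ)
          + (d : ℝ) ^ (m + 1) * (NPCB.cnt2 a0 : ℝ)) * sA a0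
        = -((((m : ℝ) + 3) * (d : ℝ) ^ (m + 1) - 2) * (2 / (d : ℝ)) ^ (m + 3))
          + (((m : ℝ) + 3) * (d : ℝ) ^ (m + 1) - 2) * (2 / (d : ℝ)) ^ (m + 3)
          + (((m : ℝ) + 1) - (NPCB.cnt1 a0 : ℝ)
          + (d : ℝ) ^ (m + 1) * (NPCB.cnt2 a0 : ℝ)) * sA a0 := by ring
    have h3 : (((m : ℝ) + 1) - (NPCB.cnt1 a0 : ℝ)
          + (d : ℝ) ^ (m + 1) * (NPCB.cnt2 a0 : ℝ)) * sA a0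
        = (((m : ℝ) + 3) * (d : ℝ) ^ (m + 1) - 2) * (2 / (d : ℝ)) ^ (m + 3) := by
      rw [hcnt1_a0, hcnt2_a0, hs_a0]
      push_cast
      ring
    linarith [hle, hsumF, h3]
  have hexp : m + 3 - 2 = m + 1 := by omega
  rw [hexp]
  push_cast
  rw [le_div_iff₀ (by linarith : (0 : ℝ) < (m : ℝ) + 3 - 2)]
  have hdpow : ((2 : ℝ) / d) ^ (m + 3) * (d : ℝ) ^ (m + 3) = 2 ^ (m + 3) := by
    rw [div_pow]
    field_simp
  have hX : (2 / (d : ℝ)) ^ (m + 3) *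
        (((m : ℝ) + 3 - 2) * (d : ℝ) ^ (m + 3) - ((m : ℝ) + 3) * (d : ℝ) ^ (m + 1) + 2)
      = ((m : ℝ) + 1) * 2 ^ (m + 3)
        - (((m : ℝ) + 3) * (d : ℝ) ^ (m + 1) - 2) * (2 / (d : ℝ)) ^ (m + 3) := by
    linear_combination ((m : ℝ) + 1) * hdpow
  rw [hX]
  have hlin : (∑ a ∈ F, sA a) * ((m : ℝ) + 3 - 2) = ((m : ℝ) + 1) * ∑ a ∈ F, sA a := by ring
  linarith [hfinal, hlin]
end
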